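/- arXiv:1908.07066 — 6 statements merged into one kernel-verified Lean document; each statement's English description precedes it below -/
import Mathlib

section
/- Under Assumption A, for every d ∈ ℕ, lim_{n→∞} P(D_{n,1}(θ*_n) = d) = E[ (λ(ξ)^d / d!) · e^{−λ(ξ)} ]. In particular, the right-hand sides form a probability mass function on ℕ, so D_{n,1}(θ*_n) converges in distribution to an ℕ-valued random variable D with P(D = d) = E[(λ(ξ)^d/d!) e^{−λ(ξ)}]. -/
open MeasureTheory ProbabilityTheory Filter Real
open scoped Topology ENNReal

/-- Degree of node `k` in the random threshold graph on nodes `{0, …, n-1}`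
with fitness variables `ξ` and threshold `θ`. -/
noncomputable def deg {Ω : Type*} (ξ : ℕ → Ω → ℝ) (n k : ℕ) (θ : ℝ) (ω : Ω) : ℕ :=
  ((Finset.range n).filter fun ℓ => ℓ ≠ k ∧ θ < ξ k ω + ξ ℓ ω).card



lemma count_binom {Ω : Type*} [MeasurableSpace Ω] (P : Measure Ω) [IsProbabilityMeasure P]
    (ξ : ℕ → Ω → ℝ) (hmeas : ∀ i, Measurable (ξ i))
    (hindep : iIndepFun ξ P)
    (hident : ∀ i, IdentDistrib (ξ i) (ξ 0) P P)
    (t : ℝ) (S : Finset ℕ) (d : ℕ) :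
    P {ω | ((S.filter fun ℓ => t < ξ ℓ ω).card = d)}
      = (S.card.choose d : ℝ≥0∞) * P {ω | t < ξ 0 ω} ^ d
        * P {ω | ξ 0 ω ≤ t} ^ (S.card - d) := by
  classical
  -- pull back distributions
  have hmap : ∀ (ℓ : ℕ) (B : Set ℝ), MeasurableSet B → P (ξ ℓ ⁻¹' B) = P (ξ 0 ⁻¹' B) := by
    intro ℓ B hB
    rw [← Measure.map_apply (hmeas ℓ) hB, ← Measure.map_apply (hmeas 0) hB,
      (hident ℓ).map_eq]
  -- the event as a finite disjoint union
  set s : Finset ℕ → ℕ → Set Ω := fun A ℓ => ξ ℓ ⁻¹' (if ℓ ∈ A then Set.Ioi t else Set.Iic t)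
    with hs
  have hpiece : ∀ A ∈ S.powersetCard d,
      {ω | (S.filter fun ℓ => t < ξ ℓ ω) = A} = ⋂ ℓ ∈ S, s A ℓ := by
    intro A hA
    obtain ⟨hAS, hAd⟩ := Finset.mem_powersetCard.1 hA
    ext ω
    simp only [Set.mem_setOf_eq, Set.mem_iInter, hs, Set.mem_preimage]
    constructor
    · rintro rfl ℓ hℓ
      by_cases h : t < ξ ℓ ω
      · simp [Finset.mem_filter, hℓ, h]
      · simp [Finset.mem_filter, h, not_lt.1 h]
    · intro h
      ext ℓ
      simp only [Finset.mem_filter]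
      constructor
      · rintro ⟨hℓS, hℓ⟩
        have := h ℓ hℓS
        by_cases hℓA : ℓ ∈ A
        · exact hℓA
        · simp [hℓA] at this; exact absurd hℓ (not_lt.2 this)
      · intro hℓA
        have hℓS := hAS hℓA
        have := h ℓ hℓS
        simp [hℓA] at this
        exact ⟨hℓS, this⟩
  have hsm : ∀ A ℓ, MeasurableSet (s A ℓ) := by
    intro A ℓ
    apply (hmeas ℓ)
    split_ifs
    · exact measurableSet_Ioi
    · exact measurableSet_Iic
  have hunion : {ω | ((S.filter fun ℓ => t < ξ ℓ ω).card = d)}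
      = ⋃ A ∈ S.powersetCard d, {ω | (S.filter fun ℓ => t < ξ ℓ ω) = A} := by
    ext ω
    simp only [Set.mem_setOf_eq, Set.mem_iUnion, Finset.mem_powersetCard]
    constructor
    · intro h
      exact ⟨_, ⟨Finset.filter_subset _ _, h⟩, rfl⟩
    · rintro ⟨A, ⟨-, hcard⟩, h⟩
      rw [h]; exact hcard
  rw [hunion, measure_biUnion_finset]
  · -- sum of the pieces
    have hval : ∀ A ∈ S.powersetCard d,
        P {ω | (S.filter fun ℓ => t < ξ ℓ ω) = A}
          = P {ω | t < ξ 0 ω} ^ d * P {ω | ξ 0 ω ≤ t} ^ (S.card - d) := by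
      intro A hA
      obtain ⟨hAS, hAd⟩ := Finset.mem_powersetCard.1 hA
      rw [hpiece A hA]
      rw [hindep.meas_biInter (s := s A) (fun ℓ _ => ⟨_, by
        split_ifs; exacts [measurableSet_Ioi, measurableSet_Iic], rfl⟩)]
      have : ∀ ℓ ∈ S, P (s A ℓ)
          = if ℓ ∈ A then P {ω | t < ξ 0 ω} else P {ω | ξ 0 ω ≤ t} := by
        intro ℓ _
        by_cases hℓA : ℓ ∈ A <;>
          simp only [hs, hℓA, if_true, if_false] <;>
          [rw [hmap ℓ _ measurableSet_Ioi]; rw [hmap ℓ _ measurableSet_Iic]] <;> rfl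
      rw [Finset.prod_congr rfl this, Finset.prod_ite, Finset.prod_const, Finset.prod_const]
      have h1 : S.filter (fun ℓ => ℓ ∈ A) = A := by
        rw [Finset.filter_mem_eq_inter, Finset.inter_eq_right.2 hAS]
      have h2 : S.filter (fun ℓ => ℓ ∉ A) = S \ A := by
        ext x; simp [Finset.mem_sdiff]
      rw [h1, h2, hAd, Finset.card_sdiff_of_subset hAS, hAd]
    rw [Finset.sum_congr rfl hval, Finset.sum_const, Finset.card_powersetCard, nsmul_eq_mul,
      mul_assoc]
  · -- pairwise disjoint
    intro A hA B hB hAB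
    simp only [Function.onFun]
    apply Set.disjoint_left.2
    intro ω h1 h2
    exact hAB (h1.symm.trans h2)
  · intro A hA
    rw [hpiece A hA]
    exact MeasurableSet.biInter S.countable_toSet fun ℓ _ => hsm A ℓ

lemma card_filter_subtype (T : Finset ℕ) (p : ℕ → Prop) [DecidablePred p] :
    (Finset.univ.filter fun ℓ : {x // x ∈ T} => p ↑ℓ).card = (T.filter p).card := by
  rw [Finset.univ_eq_attach, Finset.filter_attach, Finset.card_map, Finset.card_attach]

lemma deg_dist {Ω : Type*} [MeasurableSpace Ω] (P : Measure Ω) [IsProbabilityMeasure P]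
    (ξ : ℕ → Ω → ℝ) (hmeas : ∀ i, Measurable (ξ i))
    (hindep : iIndepFun ξ P)
    (hident : ∀ i, IdentDistrib (ξ i) (ξ 0) P P)
    (n d : ℕ) (hn : 1 ≤ n) (θ : ℝ) :
    P {ω | deg ξ n 0 θ ω = d}
      = ∫⁻ ω, (((n-1).choose d : ℝ≥0∞)
          * P {ω' | θ - ξ 0 ω < ξ 0 ω'} ^ d
          * P {ω' | ξ 0 ω' ≤ θ - ξ 0 ω} ^ (n-1-d)) ∂P := by
  classical
  set T : Finset ℕ := (Finset.range n).erase 0 with hT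
  have hTcard : T.card = n - 1 := by
    rw [hT, Finset.card_erase_of_mem (Finset.mem_range.2 hn), Finset.card_range]
  set X : Ω → ℝ := ξ 0 with hX
  set Y : Ω → ({x // x ∈ T} → ℝ) := fun ω ℓ => ξ ℓ ω with hY
  have hYm : Measurable Y := measurable_pi_lambda _ fun ℓ => hmeas ℓ
  have hXY : IndepFun X Y P := by
    have h := hindep.indepFun_finset {0} T
      (by simp [hT, Finset.disjoint_left]) hmeas
    have := h.comp (φ := fun f : ({x // x ∈ ({0}:Finset ℕ)} → ℝ) =>
      f ⟨0, Finset.mem_singleton_self 0⟩) (ψ := id)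
      (measurable_pi_apply (X := fun _ : {x // x ∈ ({0}:Finset ℕ)} => ℝ) _) measurable_id
    exact this
  set E : Set (ℝ × ({x // x ∈ T} → ℝ)) :=
    {p | (Finset.univ.filter fun ℓ : {x // x ∈ T} => θ < p.1 + p.2 ℓ).card = d} with hE
  have hEm : MeasurableSet E := by
    have hcount : Measurable fun p : ℝ × ({x // x ∈ T} → ℝ) =>
        (Finset.univ.filter fun ℓ : {x // x ∈ T} => θ < p.1 + p.2 ℓ).card := by
      simp_rw [Finset.card_filter]
      apply Finset.measurable_sum
      intro ℓ _
      have : MeasurableSet {p : ℝ × ({x // x ∈ T} → ℝ) | θ < p.1 + p.2 ℓ} := by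
        have : Measurable fun p : ℝ × ({x // x ∈ T} → ℝ) => p.1 + p.2 ℓ :=
          measurable_fst.add ((measurable_pi_apply ℓ).comp measurable_snd)
        exact measurableSet_lt measurable_const this
      exact Measurable.ite this measurable_const measurable_const
    exact hcount (measurableSet_singleton d)
  -- the event is the preimage of E
  have hpre : {ω | deg ξ n 0 θ ω = d} = (fun ω => (X ω, Y ω)) ⁻¹' E := by
    ext ω
    simp only [Set.mem_setOf_eq, Set.mem_preimage, hE, deg]
    have h1 : (Finset.range n).filter (fun ℓ => ℓ ≠ 0 ∧ θ < ξ 0 ω + ξ ℓ ω)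
        = T.filter fun ℓ => θ < ξ 0 ω + ξ ℓ ω := by
      ext ℓ
      simp only [Finset.mem_filter, hT, Finset.mem_erase]
      tauto
    have h2 : (Finset.univ.filter fun ℓ : {x // x ∈ T} => θ < X ω + Y ω ℓ).card
        = (T.filter fun ℓ => θ < ξ 0 ω + ξ ℓ ω).card :=
      card_filter_subtype T (fun ℓ => θ < ξ 0 ω + ξ ℓ ω)
    rw [h1, ← h2]
  -- apply independence, product measure, slices
  haveI : IsProbabilityMeasure (P.map Y) := Measure.isProbabilityMeasure_map hYm.aemeasurable
  rw [hpre, ← Measure.map_apply ((hmeas 0).prodMk hYm) hEm,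
    (indepFun_iff_map_prod_eq_prod_map_map (hmeas 0).aemeasurable hYm.aemeasurable).1 hXY,
    Measure.prod_apply hEm]
  rw [MeasureTheory.lintegral_map (measurable_measure_prodMk_left hEm) (hmeas 0)]
  apply lintegral_congr
  intro ω
  have hslicem : MeasurableSet (Prod.mk (ξ 0 ω) ⁻¹' E) :=
    hEm.preimage measurable_prodMk_left
  rw [Measure.map_apply hYm hslicem]
  have hYpre : Y ⁻¹' (Prod.mk (ξ 0 ω) ⁻¹' E)
      = {ω' | ((T.filter fun ℓ => θ - ξ 0 ω < ξ ℓ ω').card = d)} := by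
    ext ω'
    simp only [Set.mem_preimage, hE, Set.mem_setOf_eq, hY]
    rw [card_filter_subtype T (fun ℓ => θ < ξ 0 ω + ξ ℓ ω')]
    have : (T.filter fun ℓ => θ < ξ 0 ω + ξ ℓ ω') = T.filter fun ℓ => θ - ξ 0 ω < ξ ℓ ω' := by
      apply Finset.filter_congr
      intro ℓ _
      rw [sub_lt_iff_lt_add']
    rw [this]
  rw [hYpre, count_binom P ξ hmeas hindep hident (θ - ξ 0 ω) T d, hTcard]




section
variable {Ω : Type*} [MeasurableSpace Ω] (P : Measure Ω) [IsProbabilityMeasure P]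
    (ξ : ℕ → Ω → ℝ) (hmeas : ∀ i, Measurable (ξ i))
    (F : ℝ → ℝ) (hF : ∀ x, F x = (P {ω | ξ 0 ω ≤ x}).toReal)

include hF in
lemma F_nonneg : ∀ y, 0 ≤ F y := fun y => (hF y) ▸ ENNReal.toReal_nonneg

include hF in
lemma F_le_one : ∀ y, F y ≤ 1 := by
  intro y
  rw [hF y]
  exact ENNReal.toReal_le_of_le_ofReal zero_le_one (by simpa using prob_le_one)

include hmeas hF in
lemma P_le_eq : ∀ y, P {ω | ξ 0 ω ≤ y} = ENNReal.ofReal (F y) := by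
  intro y
  rw [hF y, ENNReal.ofReal_toReal (measure_ne_top _ _)]

include hmeas hF in
lemma P_gt_eq : ∀ y, P {ω | y < ξ 0 ω} = ENNReal.ofReal (1 - F y) := by
  intro y
  have hc : {ω | y < ξ 0 ω} = {ω | ξ 0 ω ≤ y}ᶜ := by
    ext ω; simp [not_le]
  have hm : MeasurableSet {ω | ξ 0 ω ≤ y} := (hmeas 0) measurableSet_Iic
  rw [hc, measure_compl hm (measure_ne_top _ _), measure_univ,
    P_le_eq P ξ hmeas F hF y, ENNReal.ofReal_sub _ (F_nonneg P ξ F hF y), ENNReal.ofReal_one]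

end

lemma binom_le_one (m d : ℕ) (p q : ℝ) (hp : 0 ≤ p) (hq : 0 ≤ q) (hpq : p + q = 1) :
    (m.choose d : ℝ) * p ^ d * q ^ (m - d) ≤ 1 := by
  by_cases hdm : d ≤ m
  · have := add_pow p q m  -- (p+q)^m = ∑ k in range (m+1), p^k * q^(m-k) * choose m k
    rw [hpq, one_pow] at this
    have hterm : p ^ d * q ^ (m - d) * (m.choose d : ℝ)
        ≤ ∑ k ∈ Finset.range (m + 1), p ^ k * q ^ (m - k) * (m.choose k : ℝ) := by
      apply Finset.single_le_sum (f := fun k => p ^ k * q ^ (m - k) * (m.choose k : ℝ))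
      · intro k _
        positivity
      · exact Finset.mem_range.2 (Nat.lt_succ_of_le hdm)
    calc (m.choose d : ℝ) * p ^ d * q ^ (m - d)
        = p ^ d * q ^ (m - d) * (m.choose d : ℝ) := by ring
      _ ≤ _ := hterm
      _ = 1 := this.symm
  · rw [Nat.choose_eq_zero_of_lt (not_le.1 hdm)]
    norm_num

lemma exp_hasSum (x : ℝ) : HasSum (fun k : ℕ => x ^ k / k.factorial) (Real.exp x) := by
  rw [Real.exp_eq_exp_ℝ]
  exact NormedSpace.expSeries_div_hasSum_exp x

lemma poisson_term_le_one {x : ℝ} (hx : 0 ≤ x) (d : ℕ) :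
    x ^ d / (d.factorial : ℝ) * Real.exp (-x) ≤ 1 := by
  have h1 : x ^ d / (d.factorial : ℝ) ≤ Real.exp x := by
    refine le_hasSum (exp_hasSum x) d fun k _ => by positivity
  calc x ^ d / (d.factorial : ℝ) * Real.exp (-x)
      ≤ Real.exp x * Real.exp (-x) := by
        exact mul_le_mul_of_nonneg_right h1 (Real.exp_pos _).le
    _ = 1 := by rw [← Real.exp_add]; simp

lemma poisson_tendsto (d : ℕ) (lam : ℝ) (a : ℕ → ℝ)
    (h0 : ∀ n, 0 ≤ a n) (h1 : ∀ n, a n ≤ 1)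
    (hna : Tendsto (fun n : ℕ => (n : ℝ) * a n) atTop (𝓝 lam)) :
    Tendsto (fun n : ℕ => ((n-1).choose d : ℝ) * a n ^ d * (1 - a n) ^ (n-1-d)) atTop
      (𝓝 (lam ^ d / (d.factorial : ℝ) * Real.exp (-lam))) := by
  have ha0 : Tendsto a atTop (𝓝 0) := by
    have h := hna.mul tendsto_inv_atTop_nhds_zero_nat
    rw [mul_zero] at h
    apply h.congr'
    filter_upwards [eventually_ge_atTop 1] with n hn
    have : (n : ℝ) ≠ 0 := by positivity
    field_simp
  -- for any constant c, ((n:ℝ) - c) * a n → lam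
  have hma : ∀ c : ℝ, Tendsto (fun n : ℕ => ((n : ℝ) - c) * a n) atTop (𝓝 lam) := by
    intro c
    have h := hna.sub (ha0.const_mul c)
    rw [mul_zero, sub_zero] at h
    apply h.congr
    intro n; ring
  -- Part A
  have hA : Tendsto (fun n : ℕ => ((n-1).choose d : ℝ) * a n ^ d) atTop
      (𝓝 (lam ^ d / (d.factorial : ℝ))) := by
    have key : ∀ᶠ n in atTop, ((n-1).choose d : ℝ) * a n ^ d
        = (∏ i ∈ Finset.range d, (((n : ℝ) - (1 + i)) * a n)) / (d.factorial : ℝ) := by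
      filter_upwards [eventually_ge_atTop (d + 1)] with n hn
      have hcast : ((n-1).descFactorial d : ℝ) = ∏ i ∈ Finset.range d, ((n : ℝ) - (1 + i)) := by
        rw [Nat.descFactorial_eq_prod_range, Nat.cast_prod]
        apply Finset.prod_congr rfl
        intro i hi
        have hi' : i < d := Finset.mem_range.1 hi
        rw [Nat.cast_sub (by omega : i ≤ n - 1), Nat.cast_sub (by omega : 1 ≤ n)]
        push_cast
        ring
      have hchoose : ((n-1).choose d : ℝ) = ((n-1).descFactorial d : ℝ) / (d.factorial : ℝ) := by
        rw [Nat.descFactorial_eq_factorial_mul_choose]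
        push_cast
        field_simp
      rw [hchoose, hcast, Finset.prod_mul_distrib, Finset.prod_const, Finset.card_range]
      ring
    apply Tendsto.congr' (key.mono fun n h => h.symm)
    have hprod : Tendsto (fun n : ℕ => ∏ i ∈ Finset.range d, (((n : ℝ) - (1 + i)) * a n))
        atTop (𝓝 (∏ _i ∈ Finset.range d, lam)) :=
      tendsto_finset_prod _ fun i _ => hma (1 + i)
    rw [Finset.prod_const, Finset.card_range] at hprod
    exact hprod.div_const _
  -- Part B
  have hmd : Tendsto (fun n : ℕ => ((n-1-d : ℕ) : ℝ) * a n) atTop (𝓝 lam) := by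
    apply (hma (1 + d)).congr'
    filter_upwards [eventually_ge_atTop (d + 2)] with n hn
    have : ((n - 1 - d : ℕ) : ℝ) = (n : ℝ) - (1 + d) := by
      push_cast [Nat.cast_sub (by omega : 1 ≤ n), Nat.cast_sub (by omega : d ≤ n - 1)]
      ring
    rw [this]
  have hB : Tendsto (fun n : ℕ => (1 - a n) ^ (n-1-d)) atTop (𝓝 (Real.exp (-lam))) := by
    have hup : ∀ n : ℕ, (1 - a n) ^ (n-1-d) ≤ Real.exp (-(((n-1-d : ℕ) : ℝ) * a n)) := by
      intro n
      calc (1 - a n) ^ (n-1-d) ≤ Real.exp (-(a n)) ^ (n-1-d) := by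
            apply pow_le_pow_left₀ (by linarith [h1 n])
            linarith [Real.add_one_le_exp (-(a n))]
        _ = Real.exp (-(((n-1-d : ℕ) : ℝ) * a n)) := by
            rw [← Real.exp_nat_mul]; ring_nf
    have hlow : ∀ᶠ n in atTop, Real.exp (-(((n-1-d : ℕ) : ℝ) * a n / (1 - a n)))
        ≤ (1 - a n) ^ (n-1-d) := by
      filter_upwards [ha0.eventually (eventually_lt_nhds (by norm_num : (0:ℝ) < 1/2))]
        with n hn
      have h2 : 0 < 1 - a n := by linarith
      have key : Real.exp (-(a n / (1 - a n))) ≤ 1 - a n := by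
        have h3 : 1 / (1 - a n) ≤ Real.exp (a n / (1 - a n)) := by
          have := Real.add_one_le_exp (a n / (1 - a n))
          have h4 : 1 / (1 - a n) = a n / (1 - a n) + 1 := by field_simp; ring
          linarith
        rw [Real.exp_neg]
        calc (Real.exp (a n / (1 - a n)))⁻¹ ≤ (1 / (1 - a n))⁻¹ := by
              apply inv_anti₀ (by positivity) h3
          _ = 1 - a n := by rw [one_div, inv_inv]
      calc Real.exp (-(((n-1-d : ℕ) : ℝ) * a n / (1 - a n)))
          = Real.exp (-(a n / (1 - a n))) ^ (n-1-d) := by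
            rw [← Real.exp_nat_mul]; ring_nf
        _ ≤ (1 - a n) ^ (n-1-d) :=
            pow_le_pow_left₀ (Real.exp_pos _).le key _
    have hupt : Tendsto (fun n : ℕ => Real.exp (-(((n-1-d : ℕ) : ℝ) * a n))) atTop
        (𝓝 (Real.exp (-lam))) := (Real.continuous_exp.tendsto _).comp hmd.neg
    have hlowt : Tendsto (fun n : ℕ => Real.exp (-(((n-1-d : ℕ) : ℝ) * a n / (1 - a n))))
        atTop (𝓝 (Real.exp (-lam))) := by
      have hdenom : Tendsto (fun n : ℕ => 1 - a n) atTop (𝓝 1) := by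
        have := ha0.const_sub 1
        simpa using this
      have hdiv : Tendsto (fun n : ℕ => ((n-1-d : ℕ) : ℝ) * a n / (1 - a n)) atTop
          (𝓝 lam) := by
        have := hmd.div hdenom one_ne_zero
        rw [div_one] at this; exact this
      exact (Real.continuous_exp.tendsto _).comp hdiv.neg
    exact tendsto_of_tendsto_of_tendsto_of_le_of_le' hlowt hupt hlow
      (Filter.Eventually.of_forall hup)
  have := hA.mul hB
  exact this


/-- Under Assumption A, for every `d`,
`P(D_{n,1}(θ*_n) = d) → E[(λ(ξ)^d/d!) e^{−λ(ξ)}]`, and the limiting values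
form a probability mass function on `ℕ`. -/
theorem stmt2
    {Ω : Type*} [MeasurableSpace Ω] (P : Measure Ω) [IsProbabilityMeasure P]
    (ξ : ℕ → Ω → ℝ) (hmeas : ∀ i, Measurable (ξ i))
    (hindep : iIndepFun ξ P)
    (hident : ∀ i, IdentDistrib (ξ i) (ξ 0) P P)
    (hξnn : ∀ i ω, 0 ≤ ξ i ω)
    (F : ℝ → ℝ) (hF : ∀ x, F x = (P {ω | ξ 0 ω ≤ x}).toReal)
    (hFcont : Continuous F) (hF0 : ∀ x ≤ (0 : ℝ), F x = 0)
    -- Assumption A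
    (θstar : ℕ → ℝ) (hθpos : ∀ n, 0 < θstar n)
    (hθtop : Tendsto θstar atTop atTop)
    (lam : ℝ → ℝ) (hlamnn : ∀ x, 0 ≤ x → 0 ≤ lam x)
    (hlamne : ∃ x, 0 ≤ x ∧ lam x ≠ 0)
    (hA : ∀ x, 0 ≤ x →
      Tendsto (fun n : ℕ => (n : ℝ) * (1 - F (θstar n - x))) atTop (𝓝 (lam x))) :
    (∀ d : ℕ,
      Tendsto (fun n : ℕ => (P {ω | deg ξ n 0 (θstar n) ω = d}).toReal) atTop
        (𝓝 (∫ ω, lam (ξ 0 ω) ^ d / (d.factorial : ℝ) * Real.exp (-(lam (ξ 0 ω))) ∂P)))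
    ∧ HasSum
        (fun d : ℕ => ∫ ω, lam (ξ 0 ω) ^ d / (d.factorial : ℝ) * Real.exp (-(lam (ξ 0 ω))) ∂P)
        1 := by
  have hFnn := F_nonneg P ξ F hF
  have hF1 := F_le_one P ξ F hF
  set L : Ω → ℝ := fun ω => lam (ξ 0 ω) with hL
  have hLnn : ∀ ω, 0 ≤ L ω := fun ω => hlamnn _ (hξnn 0 ω)
  have hLm : Measurable L := by
    apply measurable_of_tendsto_metrizable
      (f := fun n ω => (n : ℝ) * (1 - F (θstar n - ξ 0 ω)))
    · intro n
      exact (measurable_const.mul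
        ((continuous_const.sub (hFcont.comp (continuous_const.sub continuous_id))).measurable.comp
          (hmeas 0)))
    · rw [tendsto_pi_nhds]
      intro ω
      exact hA _ (hξnn 0 ω)
  -- the limiting pmf values
  set f : ℕ → Ω → ℝ := fun d ω => L ω ^ d / (d.factorial : ℝ) * Real.exp (-(L ω)) with hf
  have hfnn : ∀ d ω, 0 ≤ f d ω := by
    intro d ω
    have := hLnn ω
    positivity
  have hfle1 : ∀ d ω, f d ω ≤ 1 := fun d ω => poisson_term_le_one (hLnn ω) d
  have hfm : ∀ d, Measurable (f d) := by
    intro d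
    exact ((hLm.pow_const d).div_const _).mul (Real.measurable_exp.comp hLm.neg)
  have hfint : ∀ d, Integrable (f d) P := by
    intro d
    refine (integrable_const (1:ℝ)).mono' (hfm d).aestronglyMeasurable ?_
    exact Filter.Eventually.of_forall fun ω => by
      rw [Real.norm_of_nonneg (hfnn d ω)]; exact hfle1 d ω
  have hhs : ∀ ω, HasSum (fun d => f d ω) 1 := by
    intro ω
    have h := (exp_hasSum (L ω)).mul_right (Real.exp (-(L ω)))
    rw [← Real.exp_add, add_neg_cancel, Real.exp_zero] at h
    exact h
  constructor
  · intro d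
    -- the n-th probability equals an explicit binomial integral, for n ≥ 1
    have key : ∀ n, 1 ≤ n → (P {ω | deg ξ n 0 (θstar n) ω = d}).toReal
        = ∫ ω, (((n-1).choose d : ℝ)
            * (1 - F (θstar n - ξ 0 ω))^d * (F (θstar n - ξ 0 ω))^(n-1-d)) ∂P := by
      intro n hn
      rw [deg_dist P ξ hmeas hindep hident n d hn (θstar n)]
      have hgeq : ∀ ω, (((n-1).choose d : ℝ≥0∞)
              * P {ω' | θstar n - ξ 0 ω < ξ 0 ω'} ^ d
              * P {ω' | ξ 0 ω' ≤ θstar n - ξ 0 ω} ^ (n-1-d))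
          = ENNReal.ofReal (((n-1).choose d : ℝ)
              * (1 - F (θstar n - ξ 0 ω))^d * (F (θstar n - ξ 0 ω))^(n-1-d)) := by
        intro ω
        have h1 : 0 ≤ 1 - F (θstar n - ξ 0 ω) := by linarith [hF1 (θstar n - ξ 0 ω)]
        have h2 : 0 ≤ F (θstar n - ξ 0 ω) := hFnn _
        rw [P_gt_eq P ξ hmeas F hF, P_le_eq P ξ hmeas F hF,
          ← ENNReal.ofReal_pow h1, ← ENNReal.ofReal_pow h2,
          ← ENNReal.ofReal_natCast ((n-1).choose d),
          ← ENNReal.ofReal_mul (by exact Nat.cast_nonneg _),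
          ← ENNReal.ofReal_mul (mul_nonneg (Nat.cast_nonneg _) (pow_nonneg h1 d))]
      rw [lintegral_congr hgeq]
      have hcont : Continuous fun x : ℝ => (((n-1).choose d : ℝ)
          * (1 - F (θstar n - x))^d * (F (θstar n - x))^(n-1-d)) := by
        have h1 : Continuous fun x : ℝ => F (θstar n - x) :=
          hFcont.comp (continuous_const.sub continuous_id)
        exact (continuous_const.mul ((continuous_const.sub h1).pow d)).mul (h1.pow _)
      rw [← integral_eq_lintegral_of_nonneg_ae]
      · exact Filter.Eventually.of_forall fun ω => by
          have h2 := hFnn (θstar n - ξ 0 ω)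
          have h1 : (0:ℝ) ≤ 1 - F (θstar n - ξ 0 ω) := by linarith [hF1 (θstar n - ξ 0 ω)]
          exact mul_nonneg (mul_nonneg (Nat.cast_nonneg _) (pow_nonneg h1 d)) (pow_nonneg h2 _)
      · exact (hcont.measurable.comp (hmeas 0)).aestronglyMeasurable
    -- dominated convergence
    have hdct : Tendsto (fun n : ℕ => ∫ ω, (((n-1).choose d : ℝ)
            * (1 - F (θstar n - ξ 0 ω))^d * (F (θstar n - ξ 0 ω))^(n-1-d)) ∂P) atTop
        (𝓝 (∫ ω, f d ω ∂P)) := by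
      apply tendsto_integral_of_dominated_convergence (bound := fun _ => (1:ℝ))
      · intro n
        have hcont : Continuous fun x : ℝ => (((n-1).choose d : ℝ)
            * (1 - F (θstar n - x))^d * (F (θstar n - x))^(n-1-d)) := by
          have h1 : Continuous fun x : ℝ => F (θstar n - x) :=
            hFcont.comp (continuous_const.sub continuous_id)
          exact (continuous_const.mul ((continuous_const.sub h1).pow d)).mul (h1.pow _)
        exact (hcont.measurable.comp (hmeas 0)).aestronglyMeasurable
      · exact integrable_const 1
      · intro n
        apply Filter.Eventually.of_forall
        intro ω
        have h2 := hFnn (θstar n - ξ 0 ω)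
        have h1 : (0:ℝ) ≤ 1 - F (θstar n - ξ 0 ω) := by linarith [hF1 (θstar n - ξ 0 ω)]
        rw [Real.norm_of_nonneg
          (mul_nonneg (mul_nonneg (Nat.cast_nonneg _) (pow_nonneg h1 d)) (pow_nonneg h2 _))]
        have := binom_le_one (n-1) d (1 - F (θstar n - ξ 0 ω)) (F (θstar n - ξ 0 ω))
          h1 h2 (by ring)
        exact this
      · apply Filter.Eventually.of_forall
        intro ω
        have hp := poisson_tendsto d (L ω) (fun n => 1 - F (θstar n - ξ 0 ω))
          (fun n => by show (0:ℝ) ≤ 1 - F (θstar n - ξ 0 ω); linarith [hF1 (θstar n - ξ 0 ω)])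
          (fun n => by show 1 - F (θstar n - ξ 0 ω) ≤ 1; linarith [hFnn (θstar n - ξ 0 ω)])
          (hA _ (hξnn 0 ω))
        apply hp.congr
        intro n
        congr 1
        rw [sub_sub_cancel]
    exact hdct.congr' (by
      filter_upwards [eventually_ge_atTop 1] with n hn
      exact (key n hn).symm)
  · -- HasSum part
    have hnorm : ∀ d, (fun ω => ‖f d ω‖) = f d :=
      fun d => funext fun ω => Real.norm_of_nonneg (hfnn d ω)
    have hsummable : Summable fun d => ∫ ω, ‖f d ω‖ ∂P := by
      apply summable_of_sum_range_le (c := 1)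
      · intro d
        rw [hnorm d]
        exact integral_nonneg (hfnn d)
      · intro N
        have : ∑ i ∈ Finset.range N, ∫ ω, ‖f i ω‖ ∂P
            = ∫ ω, ∑ i ∈ Finset.range N, f i ω ∂P := by
          simp_rw [hnorm]
          exact (integral_finset_sum _ fun i _ => hfint i).symm
        rw [this]
        calc ∫ ω, ∑ i ∈ Finset.range N, f i ω ∂P ≤ ∫ _ω, (1:ℝ) ∂P := by
              apply integral_mono (integrable_finset_sum _ fun i _ => hfint i)
                (integrable_const 1)
              intro ω
              exact sum_le_hasSum (Finset.range N) (fun i _ => hfnn i ω) (hhs ω)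
          _ = 1 := by simp
    have h := hasSum_integral_of_summable_integral_norm (μ := P) hfint hsummable
    have heq : ∫ ω, (∑' d, f d ω) ∂P = 1 := by
      have : ∀ ω, (∑' d, f d ω) = 1 := fun ω => (hhs ω).tsum_eq
      simp_rw [this]
      simp
    rw [heq] at h
    exact h
end

section
/- For every integer d ≥ 2, set p(d) = (1/d!) ∫_0^∞ e^{(d−1)x} e^{−e^{x}} dx. Then p(d) = (1/d!) ∫_1^∞ t^{d−2} e^{−t} dt = (1/d!)((d−2)! − ∫_0^1 t^{d−2} e^{−t} dt), and consequently |p(d) − 1/(d(d−1))| ≤ 1/d!. In particular p(d)·d(d−1) → 1 as d → ∞, i.e., p(d) ∼ d^{−2}. -/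
open MeasureTheory ProbabilityTheory Filter Real
open scoped Topology ENNReal

private lemma gInt (k : ℕ) :
    IntegrableOn (fun t : ℝ => t ^ k * Real.exp (-t)) (Set.Ioi 0) := by
  have h := Real.GammaIntegral_convergent (s := (k : ℝ) + 1) (by positivity)
  refine h.congr_fun (fun x hx => ?_) measurableSet_Ioi
  have h1 : ((k : ℝ) + 1 - 1) = ((k : ℕ) : ℝ) := by push_cast; ring
  rw [h1]; simp only [Real.rpow_natCast]
  ring

private lemma gVal (k : ℕ) :
    (∫ t in Set.Ioi (0:ℝ), t ^ k * Real.exp (-t)) = (k.factorial : ℝ) := by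
  have h := Real.Gamma_eq_integral (s := (k : ℝ) + 1) (by positivity)
  have h2 := Real.Gamma_nat_eq_factorial k
  rw [h] at h2
  rw [← h2]
  refine setIntegral_congr_fun measurableSet_Ioi (fun x hx => ?_)
  have h1 : ((k : ℝ) + 1 - 1) = ((k : ℕ) : ℝ) := by push_cast; ring
  rw [h1, Real.rpow_natCast]
  ring

private lemma gSubst (k : ℕ) :
    (∫ x in Set.Ioi (0:ℝ), Real.exp (((k:ℝ) + 1) * x) * Real.exp (-Real.exp x))
      = ∫ t in Set.Ioi (1:ℝ), t ^ k * Real.exp (-t) := by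
  have himg : Real.exp '' Set.Ici 0 ⊆ Set.Ioi 0 := by
    rintro t ⟨x, -, rfl⟩; exact Real.exp_pos x
  have hg2 : IntegrableOn
      (fun x => ((fun t : ℝ => t ^ k * Real.exp (-t)) ∘ Real.exp) x * Real.exp x)
      (Set.Ici 0) := by
    have hb : IntegrableOn (fun x : ℝ => Real.exp (((k:ℝ)+2)^2) * Real.exp (-x))
        (Set.Ici 0) := by
      rw [integrableOn_Ici_iff_integrableOn_Ioi]
      have h0 : IntegrableOn (fun x : ℝ => Real.exp (((k:ℝ)+2)^2) * Real.exp (-1 * x))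
          (Set.Ioi 0) := (exp_neg_integrableOn_Ioi 0 (one_pos (α := ℝ))).const_mul
        (Real.exp (((k:ℝ)+2)^2))
      refine h0.congr_fun (fun x _ => ?_) measurableSet_Ioi
      norm_num
    refine Integrable.mono' hb ((Continuous.aestronglyMeasurable (by continuity)).restrict) ?_
    filter_upwards [ae_restrict_mem measurableSet_Ici] with x hx
    have hx0 : (0:ℝ) ≤ x := hx
    have hE : ((fun t : ℝ => t ^ k * Real.exp (-t)) ∘ Real.exp) x * Real.exp x
        = Real.exp (((k:ℝ) + 1) * x - Real.exp x) := by
      show Real.exp x ^ k * Real.exp (-Real.exp x) * Real.exp x = _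
      rw [← Real.exp_nat_mul, ← Real.exp_add, ← Real.exp_add]
      congr 1; ring
    rw [hE, Real.norm_eq_abs, abs_of_pos (Real.exp_pos _), ← Real.exp_add]
    apply Real.exp_le_exp.mpr
    have hhalf : x / 2 + 1 ≤ Real.exp (x / 2) := Real.add_one_le_exp (x / 2)
    have hsq : Real.exp (x/2) * Real.exp (x/2) = Real.exp x := by
      rw [← Real.exp_add]; ring_nf
    nlinarith [sq_nonneg ((k:ℝ) + 2 - x/2), sq_nonneg (x/2), Real.exp_pos (x/2)]
  have key := MeasureTheory.integral_comp_mul_deriv_Ioi (f := Real.exp) (f' := Real.exp)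
    (g := fun t : ℝ => t ^ k * Real.exp (-t)) (a := 0)
    Real.continuous_exp.continuousOn Real.tendsto_exp_atTop
    (fun x _ => (Real.hasDerivAt_exp x).hasDerivWithinAt)
    (Continuous.continuousOn (by continuity))
    ((gInt k).mono_set himg) hg2
  rw [Real.exp_zero] at key
  rw [← key]
  refine setIntegral_congr_fun measurableSet_Ioi (fun x _ => ?_)
  show Real.exp (((k:ℝ) + 1) * x) * Real.exp (-Real.exp x)
      = Real.exp x ^ k * Real.exp (-Real.exp x) * Real.exp x
  simp only [← Real.exp_nat_mul, ← Real.exp_add]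
  congr 1; ring

private lemma gSplit (k : ℕ) :
    (∫ t in Set.Ioi (0:ℝ), t ^ k * Real.exp (-t))
      = (∫ t in Set.Ioo (0:ℝ) 1, t ^ k * Real.exp (-t))
        + ∫ t in Set.Ioi (1:ℝ), t ^ k * Real.exp (-t) := by
  have hdj : Disjoint (Set.Ioo (0:ℝ) 1) (Set.Ici 1) :=
    Set.disjoint_left.mpr fun x hx hx' => absurd hx' (not_le.mpr hx.2)
  rw [← Set.Ioo_union_Ici_eq_Ioi (zero_lt_one (α := ℝ)),
    setIntegral_union hdj measurableSet_Ici
      ((gInt k).mono_set Set.Ioo_subset_Ioi_self)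
      ((gInt k).mono_set (fun x (hx : x ∈ Set.Ici (1:ℝ)) => show (0:ℝ) < x from lt_of_lt_of_le zero_lt_one hx)),
    integral_Ici_eq_integral_Ioi]

private lemma gBound (k : ℕ) :
    |∫ t in Set.Ioo (0:ℝ) 1, t ^ k * Real.exp (-t)| ≤ 1 := by
  have hC : ∀ x ∈ Set.Ioo (0:ℝ) 1, ‖x ^ k * Real.exp (-x)‖ ≤ 1 := by
    intro x hx
    rw [Real.norm_eq_abs,
      abs_of_nonneg (mul_nonneg (pow_nonneg hx.1.le k) (Real.exp_pos _).le)]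
    have h1 : x ^ k ≤ 1 := pow_le_one₀ hx.1.le hx.2.le
    have h2 : Real.exp (-x) ≤ 1 := Real.exp_le_one_iff.mpr (by linarith [hx.1])
    nlinarith [pow_nonneg hx.1.le k, (Real.exp_pos (-x)).le]
  have h := norm_setIntegral_le_of_norm_le_const (μ := volume)
    (s := Set.Ioo (0:ℝ) 1) (f := fun t : ℝ => t ^ k * Real.exp (-t)) (C := 1)
    (by simp) hC
  simpa [Real.volume_real_Ioo] using h

/-- Properties of the limiting pmf
`p(d) = (1/d!) ∫_0^∞ e^{(d−1)x} e^{−e^x}dx` for `d ≥ 2`: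
the two integral representations, the bound `|p(d) − 1/(d(d−1))| ≤ 1/d!`, and
the tail behaviour `p(d)·d(d−1) → 1`, i.e. `p(d) ∼ d⁻²`. -/
theorem stmt6
    (p : ℕ → ℝ)
    (hp : ∀ d : ℕ, p d = (1 / (d.factorial : ℝ)) *
        ∫ x in Set.Ioi (0 : ℝ), Real.exp (((d : ℝ) - 1) * x) * Real.exp (-Real.exp x)) :
    (∀ d : ℕ, 2 ≤ d →
        p d = (1 / (d.factorial : ℝ)) * ∫ t in Set.Ioi (1 : ℝ), t ^ (d - 2) * Real.exp (-t))
    ∧ (∀ d : ℕ, 2 ≤ d →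
        p d = (1 / (d.factorial : ℝ)) *
          (((d - 2).factorial : ℝ) - ∫ t in Set.Ioo (0 : ℝ) 1, t ^ (d - 2) * Real.exp (-t)))
    ∧ (∀ d : ℕ, 2 ≤ d →
        |p d - 1 / ((d : ℝ) * ((d : ℝ) - 1))| ≤ 1 / (d.factorial : ℝ))
    ∧ Tendsto (fun d : ℕ => p d * ((d : ℝ) * ((d : ℝ) - 1))) atTop (𝓝 1) := by
  have h1 : ∀ d : ℕ, 2 ≤ d →
      p d = (1 / (d.factorial : ℝ)) * ∫ t in Set.Ioi (1:ℝ), t ^ (d - 2) * Real.exp (-t) := by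
    intro d hd
    obtain ⟨k, rfl⟩ : ∃ k, d = k + 2 := ⟨d - 2, by omega⟩
    rw [hp]
    congr 1
    have hc : ((k + 2 : ℕ) : ℝ) - 1 = (k : ℝ) + 1 := by push_cast; ring
    rw [hc, gSubst k]
    norm_num
  have h2 : ∀ d : ℕ, 2 ≤ d →
      p d = (1 / (d.factorial : ℝ)) *
        (((d - 2).factorial : ℝ) - ∫ t in Set.Ioo (0:ℝ) 1, t ^ (d - 2) * Real.exp (-t)) := by
    intro d hd
    rw [h1 d hd]
    congr 1
    have := gSplit (d - 2)
    rw [gVal (d - 2)] at this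
    linarith
  have h3 : ∀ d : ℕ, 2 ≤ d →
      |p d - 1 / ((d : ℝ) * ((d : ℝ) - 1))| ≤ 1 / (d.factorial : ℝ) := by
    intro d hd
    obtain ⟨k, rfl⟩ : ∃ k, d = k + 2 := ⟨d - 2, by omega⟩
    rw [h2 (k + 2) hd]
    have hks : k + 2 - 2 = k := by omega
    rw [hks]
    have hfac : ((k + 2).factorial : ℝ) = ((k:ℝ)+2) * ((k:ℝ)+1) * (k.factorial : ℝ) := by
      rw [Nat.factorial_succ, Nat.factorial_succ]; push_cast; ring
    have hfp : (0:ℝ) < (k.factorial : ℝ) := by positivity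
    have hcast : ((k + 2 : ℕ) : ℝ) * (((k + 2 : ℕ) : ℝ) - 1) = ((k:ℝ)+2) * ((k:ℝ)+1) := by
      push_cast; ring
    have hkey : (1 / ((k + 2).factorial : ℝ)) *
        ((k.factorial : ℝ) - ∫ t in Set.Ioo (0:ℝ) 1, t ^ k * Real.exp (-t))
        - 1 / (((k + 2 : ℕ) : ℝ) * (((k + 2 : ℕ) : ℝ) - 1))
        = -(∫ t in Set.Ioo (0:ℝ) 1, t ^ k * Real.exp (-t)) / ((k + 2).factorial : ℝ) := by
      rw [hcast, hfac]
      field_simp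
      ring
    rw [hkey, abs_div, abs_neg, abs_of_pos (by positivity : (0:ℝ) < ((k+2).factorial : ℝ))]
    rw [div_le_div_iff₀ (by positivity) (by positivity), one_mul]
    calc |∫ t in Set.Ioo (0:ℝ) 1, t ^ k * Real.exp (-t)| * ((k + 2).factorial : ℝ)
        ≤ 1 * ((k + 2).factorial : ℝ) := by
          gcongr; exact gBound k
      _ = ((k + 2).factorial : ℝ) := one_mul _
  refine ⟨h1, h2, h3, ?_⟩
  have key : ∀ᶠ d : ℕ in atTop,
      ‖p d * ((d : ℝ) * ((d : ℝ) - 1)) - 1‖ ≤ 1 / ((d : ℝ) - 2) := by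
    filter_upwards [eventually_ge_atTop 3] with d hd
    have h2d : 2 ≤ d := by omega
    obtain ⟨k, rfl⟩ : ∃ k, d = k + 3 := ⟨d - 3, by omega⟩
    have hA : (0:ℝ) < ((k + 3 : ℕ) : ℝ) * (((k + 3 : ℕ) : ℝ) - 1) := by
      push_cast; nlinarith [Nat.cast_nonneg (α := ℝ) k]
    have habs := h3 (k + 3) h2d
    have heq : |p (k + 3) * (((k + 3 : ℕ) : ℝ) * (((k + 3 : ℕ) : ℝ) - 1)) - 1|
        = |p (k + 3) - 1 / (((k + 3 : ℕ) : ℝ) * (((k + 3 : ℕ) : ℝ) - 1))|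
          * (((k + 3 : ℕ) : ℝ) * (((k + 3 : ℕ) : ℝ) - 1)) := by
      have he : p (k + 3) * (((k + 3 : ℕ) : ℝ) * (((k + 3 : ℕ) : ℝ) - 1)) - 1
          = (p (k + 3) - 1 / (((k + 3 : ℕ) : ℝ) * (((k + 3 : ℕ) : ℝ) - 1)))
            * (((k + 3 : ℕ) : ℝ) * (((k + 3 : ℕ) : ℝ) - 1)) := by
        rw [sub_mul, one_div_mul_cancel hA.ne']
      rw [he, abs_mul, abs_of_pos hA]
    rw [Real.norm_eq_abs, heq]
    have hstep : |p (k + 3) - 1 / (((k + 3 : ℕ) : ℝ) * (((k + 3 : ℕ) : ℝ) - 1))|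
          * (((k + 3 : ℕ) : ℝ) * (((k + 3 : ℕ) : ℝ) - 1))
        ≤ (1 / ((k + 3).factorial : ℝ)) * (((k + 3 : ℕ) : ℝ) * (((k + 3 : ℕ) : ℝ) - 1)) := by
      gcongr
    refine hstep.trans ?_
    have hfac : ((k + 3).factorial : ℝ)
        = ((k:ℝ)+3) * ((k:ℝ)+2) * ((k + 1).factorial : ℝ) := by
      rw [Nat.factorial_succ, Nat.factorial_succ]; push_cast; ring
    have hcast : ((k + 3 : ℕ) : ℝ) * (((k + 3 : ℕ) : ℝ) - 1) = ((k:ℝ)+3) * ((k:ℝ)+2) := by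
      push_cast; ring
    have hcast2 : ((k + 3 : ℕ) : ℝ) - 2 = (k:ℝ) + 1 := by push_cast; ring
    rw [hcast, hcast2, hfac]
    have hf1 : ((k:ℝ)+1) ≤ ((k + 1).factorial : ℝ) := by
      exact_mod_cast Nat.cast_le.mpr (Nat.self_le_factorial (k + 1))
    have hp1 : (0:ℝ) < (k:ℝ) + 1 := by positivity
    have hp2 : (0:ℝ) < ((k + 1).factorial : ℝ) := by positivity
    have hsimp : 1 / (((k:ℝ)+3) * ((k:ℝ)+2) * ((k + 1).factorial : ℝ))
        * (((k:ℝ)+3) * ((k:ℝ)+2)) = 1 / ((k + 1).factorial : ℝ) := by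
      field_simp
    rw [hsimp]
    exact one_div_le_one_div_of_le hp1 hf1
  have hlim : Tendsto (fun d : ℕ => 1 / ((d : ℝ) - 2)) atTop (𝓝 0) := by
    have h1 : Tendsto (fun d : ℕ => (d : ℝ) - 2) atTop atTop := by
      have := tendsto_atTop_add_const_right atTop (-2 : ℝ)
        (tendsto_natCast_atTop_atTop (R := ℝ))
      simpa [sub_eq_add_neg] using this
    simp only [one_div]; exact h1.inv_tendsto_atTop
  have h0 := squeeze_zero_norm' key hlim
  have := h0.add_const 1
  simpa using this
end

section
/- Under Assumption A, for every r ≥ 1 and every r-tuple (z_1, …, z_r) with 0 ≤ z_s ≤ 1 for all s, lim_{n→∞} E[ Π_{s=1}^r z_s^{D_{n,s}(θ*_n)} ] = E[ exp( − Σ_{t=1}^r (1 − z_{α_r(t)}) (Π_{s=t+1}^r z_{α_r(s)}) λ(ξ_{r|t}) ) ], where ξ_{r|1} ≤ … ≤ ξ_{r|r} are the order statistics of ξ_1, …, ξ_r and α_r is the (random) permutation of {1,…,r} with ξ_{r|t} = ξ_{α_r(t)} for each t (ties broken lexicographically); the empty product Π_{s=r+1}^r is 1. -/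
open MeasureTheory ProbabilityTheory Filter Real
open scoped Topology ENNReal

lemma pow_card_filter {ι : Type*} (A : Finset ι) (p : ι → Prop) [DecidablePred p] (c : ℝ) :
    c ^ (A.filter p).card = ∏ ℓ ∈ A, if p ℓ then c else 1 := by
  rw [Finset.prod_ite, Finset.prod_const, Finset.prod_const, one_pow, mul_one]

lemma fin_telescope : ∀ (r : ℕ) (w : Fin r → ℝ) (a : Fin r),
    ∑ t ∈ Finset.Ici a, (1 - w t) * ∏ s ∈ Finset.Ioi t, w s
      = 1 - ∏ s ∈ Finset.Ici a, w s := by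
  intro r
  cases r with
  | zero => exact fun w a => a.elim0
  | succ n =>
    intro w a
    induction a using Fin.reverseInduction with
    | last =>
      have h1 : Finset.Ici (Fin.last n) = {Fin.last n} := by
        ext t; simp [Fin.last_le_iff]
      have h2 : Finset.Ioi (Fin.last n) = ∅ := by
        ext t; simp [Fin.le_last, not_lt.2 (Fin.le_last t)]
      rw [h1]; simp [h2]
    | cast i ih =>
      have h1 : Finset.Ici (i.castSucc) = insert i.castSucc (Finset.Ici i.succ) := by
        ext t
        simp only [Finset.mem_Ici, Finset.mem_insert, Fin.le_def, Fin.coe_castSucc,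
          Fin.ext_iff, Fin.val_succ]
        omega
      have h2 : Finset.Ioi (i.castSucc) = Finset.Ici i.succ := by
        ext t
        simp only [Finset.mem_Ioi, Finset.mem_Ici, Fin.lt_def, Fin.le_def, Fin.coe_castSucc,
          Fin.val_succ]
        omega
      have h3 : i.castSucc ∉ Finset.Ici i.succ := by
        simp only [Finset.mem_Ici, Fin.le_def, Fin.coe_castSucc, Fin.val_succ]; omega
      rw [h1, Finset.sum_insert h3, Finset.prod_insert h3, h2, ih]
      ring

lemma prod_ite_one_sub {r : ℕ} (w : Fin r → ℝ) (c : Fin r → Prop) [DecidablePred c]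
    (hc : ∀ ⦃s t : Fin r⦄, s ≤ t → c s → c t) :
    ∏ t, (if c t then w t else 1)
      = 1 - ∑ t, (if c t then (1 - w t) * ∏ s ∈ Finset.Ioi t, w s else 0) := by
  rw [← Finset.prod_filter, ← Finset.sum_filter]
  by_cases hA : (Finset.univ.filter c).Nonempty
  · have hca : c ((Finset.univ.filter c).min' hA) := by
      have := Finset.min'_mem (Finset.univ.filter c) hA
      simpa using this
    have hA' : Finset.univ.filter c = Finset.Ici ((Finset.univ.filter c).min' hA) := by
      ext t
      simp only [Finset.mem_filter, Finset.mem_univ, true_and, Finset.mem_Ici]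
      exact ⟨fun h => Finset.min'_le _ t (by simpa using h), fun h => hc h hca⟩
    rw [hA', fin_telescope]; ring
  · rw [Finset.not_nonempty_iff_eq_empty] at hA
    rw [hA]; simp

lemma tendsto_pow_exp_aux {r : ℕ} {a : ℕ → ℝ} {S : ℝ}
    (h0 : ∀ n, 0 ≤ a n) (h1 : ∀ n, a n ≤ 1)
    (h : Tendsto (fun n : ℕ => (n : ℝ) * a n) atTop (𝓝 S)) :
    Tendsto (fun n : ℕ => (1 - a n) ^ (n - r)) atTop (𝓝 (Real.exp (-S))) := by
  have ha0 : Tendsto a atTop (𝓝 0) := by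
    have h2 : Tendsto (fun n : ℕ => ((n : ℝ) * a n) * (n : ℝ)⁻¹) atTop (𝓝 (S * 0)) :=
      h.mul tendsto_inv_atTop_nhds_zero_nat
    rw [mul_zero] at h2
    apply h2.congr'
    filter_upwards [eventually_ge_atTop 1] with n hn
    have : (n : ℝ) ≠ 0 := by positivity
    field_simp
  have hb : Tendsto (fun n : ℕ => ((n : ℝ) - r) * a n) atTop (𝓝 S) := by
    have := h.sub (ha0.const_mul (r : ℝ))
    simpa [sub_mul] using this
  have hlt : ∀ᶠ n : ℕ in atTop, a n < 1 := by
    have := ha0.eventually (eventually_lt_nhds one_pos)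
    exact this
  -- main : the exponent converges
  have hmain : Tendsto (fun n : ℕ => ((n - r : ℕ) : ℝ) * Real.log (1 - a n)) atTop (𝓝 (-S)) := by
    have hup : Tendsto (fun n : ℕ => ((n : ℝ) - r) * (-a n)) atTop (𝓝 (-S)) := by
      simpa [mul_neg] using hb.neg
    have hinv : Tendsto (fun n : ℕ => (1 - a n)⁻¹) atTop (𝓝 1) := by
      have h1' : Tendsto (fun n : ℕ => 1 - a n) atTop (𝓝 1) := by
        simpa using (tendsto_const_nhds (x := (1:ℝ))).sub ha0
      simpa using h1'.inv₀ one_ne_zero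
    have hlo : Tendsto (fun n : ℕ => ((n : ℝ) - r) * (-a n) * (1 - a n)⁻¹) atTop (𝓝 (-S)) := by
      simpa using hup.mul hinv
    apply tendsto_of_tendsto_of_tendsto_of_le_of_le' hlo hup
    · filter_upwards [hlt, eventually_ge_atTop r] with n hn hrn
      have hpos : (0:ℝ) < 1 - a n := by linarith
      have hcast : ((n - r : ℕ) : ℝ) = (n : ℝ) - r := by
        rw [Nat.cast_sub hrn]
      rw [hcast]
      have hlog : -(a n) * (1 - a n)⁻¹ ≤ Real.log (1 - a n) := by
        have := Real.log_le_sub_one_of_pos (inv_pos.2 hpos)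
        rw [Real.log_inv] at this
        have h2 : (1 - a n)⁻¹ - 1 = a n * (1 - a n)⁻¹ := by
          field_simp
          ring
        nlinarith [this]
      calc ((n:ℝ) - r) * (-a n) * (1 - a n)⁻¹ = ((n:ℝ) - r) * (-(a n) * (1 - a n)⁻¹) := by ring
        _ ≤ ((n:ℝ) - r) * Real.log (1 - a n) := by
            apply mul_le_mul_of_nonneg_left hlog
            have : (r:ℝ) ≤ n := by exact_mod_cast hrn
            linarith
    · filter_upwards [hlt, eventually_ge_atTop r] with n hn hrn
      have hpos : (0:ℝ) < 1 - a n := by linarith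
      have hcast : ((n - r : ℕ) : ℝ) = (n : ℝ) - r := by
        rw [Nat.cast_sub hrn]
      rw [hcast]
      have hlog : Real.log (1 - a n) ≤ -(a n) := by
        have := Real.log_le_sub_one_of_pos hpos
        linarith
      have hnr : (0:ℝ) ≤ (n : ℝ) - r := by
        have : (r:ℝ) ≤ n := by exact_mod_cast hrn
        linarith
      have : ((n:ℝ) - r) * Real.log (1 - a n) ≤ ((n:ℝ) - r) * (-a n) :=
        mul_le_mul_of_nonneg_left hlog hnr
      linarith
  have := (Real.continuous_exp.tendsto (-S)).comp hmain
  apply this.congr'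
  filter_upwards [hlt] with n hn
  have hpos : (0:ℝ) < 1 - a n := by linarith
  simp only [Function.comp_apply]
  rw [← Real.exp_log hpos, ← Real.exp_nat_mul, Real.exp_log hpos]

noncomputable def phi {r : ℕ} (μ : Measure ℝ) (z : Fin r → ℝ) (θ : ℝ) (u : Fin r → ℝ) : ℝ :=
  ∫ y, ∏ s : Fin r, (if θ < u s + y then z s else 1) ∂μ

lemma phi_integrand_meas {r : ℕ} (z : Fin r → ℝ) (θ : ℝ) :
    Measurable (fun p : (Fin r → ℝ) × ℝ => ∏ s : Fin r, (if θ < p.1 s + p.2 then z s else 1)) := by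
  apply Finset.measurable_prod
  intro s _
  have hm : Measurable fun p : (Fin r → ℝ) × ℝ => p.1 s + p.2 :=
    (measurable_fst.eval.add measurable_snd)
  exact Measurable.ite (measurableSet_lt measurable_const hm) measurable_const measurable_const

lemma phi_measurable {r : ℕ} (μ : Measure ℝ) [IsProbabilityMeasure μ] (z : Fin r → ℝ) (θ : ℝ) :
    Measurable (phi μ z θ) :=
  ((phi_integrand_meas z θ).stronglyMeasurable.integral_prod_right').measurable

lemma phi_mem {r : ℕ} (μ : Measure ℝ) [IsProbabilityMeasure μ] (z : Fin r → ℝ)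
    (hz : ∀ s, 0 ≤ z s ∧ z s ≤ 1) (θ : ℝ) (u : Fin r → ℝ) :
    0 ≤ phi μ z θ u ∧ phi μ z θ u ≤ 1 := by
  have hnn : ∀ y : ℝ, 0 ≤ ∏ s : Fin r, (if θ < u s + y then z s else 1) := fun y =>
    Finset.prod_nonneg fun s _ => by split <;> simp [(hz s).1]
  have hle : ∀ y : ℝ, ∏ s : Fin r, (if θ < u s + y then z s else 1) ≤ 1 := fun y =>
    Finset.prod_le_one (fun s _ => by split <;> simp [(hz s).1])
      (fun s _ => by split <;> simp [(hz s).2])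
  constructor
  · exact integral_nonneg hnn
  · have hint : Integrable (fun y => ∏ s : Fin r, (if θ < u s + y then z s else 1)) μ := by
      apply Integrable.mono' (integrable_const (1:ℝ))
      · exact ((phi_integrand_meas z θ).comp (measurable_const.prodMk measurable_id)).aestronglyMeasurable
      · filter_upwards with y
        rw [Real.norm_eq_abs, abs_le]
        exact ⟨by linarith [hnn y], hle y⟩
    calc phi μ z θ u ≤ ∫ _, (1:ℝ) ∂μ := integral_mono hint (integrable_const 1) hle
      _ = 1 := by simp

lemma phi_eq {r : ℕ} (μ : Measure ℝ) [IsProbabilityMeasure μ] (z : Fin r → ℝ)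
    (hz : ∀ s, 0 ≤ z s ∧ z s ≤ 1) (θ : ℝ) (u : Fin r → ℝ) :
    phi μ z θ u = 1 - ∑ t : Fin r,
      (1 - z (Tuple.sort u t)) * (∏ s ∈ Finset.Ioi t, z (Tuple.sort u s)) *
        (μ (Set.Ioi (θ - u (Tuple.sort u t)))).toReal := by
  set σ := Tuple.sort u with hσ
  have hpt : ∀ y : ℝ, ∏ s : Fin r, (if θ < u s + y then z s else 1)
      = 1 - ∑ t : Fin r, (if θ - u (σ t) < y
          then (1 - z (σ t)) * ∏ s ∈ Finset.Ioi t, z (σ s) else 0) := by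
    intro y
    have h1 : ∏ s : Fin r, (if θ < u s + y then z s else 1)
        = ∏ t : Fin r, (if θ < u (σ t) + y then z (σ t) else 1) :=
      (Equiv.prod_comp σ (fun s => if θ < u s + y then z s else 1)).symm
    have h2 : ∀ t : Fin r, (if θ < u (σ t) + y then z (σ t) else 1)
        = (if θ - u (σ t) < y then z (σ t) else 1) := by
      intro t
      apply if_congr _ rfl rfl
      rw [sub_lt_iff_lt_add, add_comm]
    rw [h1]
    rw [Finset.prod_congr rfl (fun t _ => h2 t)]
    exact prod_ite_one_sub (fun t => z (σ t)) (fun t => θ - u (σ t) < y)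
      (fun s t hst hcs => by
        have := Tuple.monotone_sort u hst
        simp only [Function.comp_apply] at this
        have : u (σ s) ≤ u (σ t) := this
        linarith)
  have hIntInd : ∀ t : Fin r, Integrable (fun y : ℝ => if θ - u (σ t) < y
      then (1 - z (σ t)) * ∏ s ∈ Finset.Ioi t, z (σ s) else 0) μ := by
    intro t
    have : (fun y : ℝ => if θ - u (σ t) < y
        then (1 - z (σ t)) * ∏ s ∈ Finset.Ioi t, z (σ s) else 0)
        = (Set.Ioi (θ - u (σ t))).indicator
            (fun _ => (1 - z (σ t)) * ∏ s ∈ Finset.Ioi t, z (σ s)) := by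
      funext y
      rw [Set.indicator_apply]
      simp [Set.mem_Ioi]
    rw [this]
    exact (integrable_const _).indicator measurableSet_Ioi
  calc phi μ z θ u
      = ∫ y, (1 - ∑ t : Fin r, (if θ - u (σ t) < y
          then (1 - z (σ t)) * ∏ s ∈ Finset.Ioi t, z (σ s) else 0)) ∂μ := by
        unfold phi
        exact integral_congr_ae (Filter.Eventually.of_forall hpt)
    _ = 1 - ∑ t : Fin r,
          (1 - z (σ t)) * (∏ s ∈ Finset.Ioi t, z (σ s)) *
            (μ (Set.Ioi (θ - u (σ t)))).toReal := by
        rw [integral_sub (integrable_const 1) (integrable_finset_sum _ (fun t _ => hIntInd t))]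
        rw [integral_finset_sum _ (fun t _ => hIntInd t)]
        simp only [integral_const, measure_univ, probReal_univ, ENNReal.toReal_one, one_smul]
        congr 1
        apply Finset.sum_congr rfl
        intro t _
        have : (fun y : ℝ => if θ - u (σ t) < y
            then (1 - z (σ t)) * ∏ s ∈ Finset.Ioi t, z (σ s) else 0)
            = (Set.Ioi (θ - u (σ t))).indicator
                (fun _ => (1 - z (σ t)) * ∏ s ∈ Finset.Ioi t, z (σ s)) := by
          funext y
          rw [Set.indicator_apply]
          simp [Set.mem_Ioi]
        rw [this, integral_indicator_const _ measurableSet_Ioi, smul_eq_mul, mul_comm, Measure.real]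

lemma deg_eq_fin {Ω : Type*} (ξ : ℕ → Ω → ℝ) (k : ℕ) (j : Fin k) (θ : ℝ) (ω : Ω) :
    deg ξ k (j : ℕ) θ ω
      = (Finset.univ.filter fun ℓ : Fin k => ℓ ≠ j ∧ θ < ξ (j : ℕ) ω + ξ (ℓ : ℕ) ω).card := by
  unfold deg
  rw [← Nat.Iio_eq_range, ← Fin.map_valEmbedding_univ, Finset.filter_map, Finset.card_map]
  congr 1
  apply Finset.filter_congr
  intro ℓ _
  simp [Fin.valEmbedding, Fin.ext_iff]

lemma factor_step {Ω : Type*} [MeasurableSpace Ω] (P : Measure Ω) [IsProbabilityMeasure P]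
    (ξ : ℕ → Ω → ℝ) (hmeas : ∀ i, Measurable (ξ i))
    (hindep : iIndepFun ξ P)
    (hident : ∀ i, IdentDistrib (ξ i) (ξ 0) P P)
    (k : ℕ) (H : (Fin k → ℝ) × ℝ → ℝ) (hH : Measurable H) (hHb : ∀ p, |H p| ≤ 1) :
    ∫ ω, H (fun s : Fin k => ξ (s : ℕ) ω, ξ k ω) ∂P
      = ∫ ω, ∫ y, H (fun s : Fin k => ξ (s : ℕ) ω, y) ∂(P.map (ξ 0)) ∂P := by
  set μ : Measure ℝ := P.map (ξ 0) with hμdef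
  have hμ : IsProbabilityMeasure μ := Measure.isProbabilityMeasure_map (hmeas 0).aemeasurable
  set V : Ω → (Fin k → ℝ) := fun ω s => ξ (s : ℕ) ω with hVdef
  have hV : Measurable V := measurable_pi_lambda _ fun s => hmeas s
  have hVP : IsProbabilityMeasure (P.map V) := Measure.isProbabilityMeasure_map hV.aemeasurable
  have hIndep : IndepFun V (ξ k) P := by
    have h1 := hindep.indepFun_finset (Finset.range k) {k}
      (by simp [Finset.disjoint_singleton_right]) hmeas
    have hφ : Measurable (fun v : ({x // x ∈ Finset.range k} → ℝ) =>
        (fun s : Fin k => v ⟨(s : ℕ), Finset.mem_range.2 s.isLt⟩)) :=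
      measurable_pi_lambda _ fun s => measurable_pi_apply _
    have hψ : Measurable (fun w : ({x // x ∈ ({k} : Finset ℕ)} → ℝ) =>
        w ⟨k, Finset.mem_singleton_self k⟩) := measurable_pi_apply _
    exact h1.comp hφ hψ
  have hpair : P.map (fun ω => (V ω, ξ k ω)) = (P.map V).prod μ := by
    rw [hμdef, ← (hident k).map_eq]
    exact (indepFun_iff_map_prod_eq_prod_map_map hV.aemeasurable
      (hmeas k).aemeasurable).1 hIndep
  have hint : Integrable H ((P.map V).prod μ) := by
    apply Integrable.mono' (integrable_const (1:ℝ)) hH.aestronglyMeasurable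
    filter_upwards with p
    rw [Real.norm_eq_abs]
    exact hHb p
  calc ∫ ω, H (V ω, ξ k ω) ∂P
      = ∫ p, H p ∂(P.map (fun ω => (V ω, ξ k ω))) :=
        (integral_map (hV.prodMk (hmeas k)).aemeasurable hH.aestronglyMeasurable).symm
    _ = ∫ p, H p ∂((P.map V).prod μ) := by rw [hpair]
    _ = ∫ v, ∫ y, H (v, y) ∂μ ∂(P.map V) := integral_prod H hint
    _ = ∫ ω, ∫ y, H (V ω, y) ∂μ ∂P :=
        integral_map hV.aemeasurable
          (hH.stronglyMeasurable.integral_prod_right').aestronglyMeasurable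

lemma factor_main {Ω : Type*} [MeasurableSpace Ω] (P : Measure Ω) [IsProbabilityMeasure P]
    (ξ : ℕ → Ω → ℝ) (hmeas : ∀ i, Measurable (ξ i))
    (hindep : iIndepFun ξ P)
    (hident : ∀ i, IdentDistrib (ξ i) (ξ 0) P P)
    {r : ℕ} (z : Fin r → ℝ) (hz : ∀ s, 0 ≤ z s ∧ z s ≤ 1) (θ : ℝ) :
    ∀ (m : ℕ) (h : (Fin r → ℝ) → ℝ), Measurable h → (∀ u, 0 ≤ h u ∧ h u ≤ 1) →
    ∫ ω, (∏ s : Fin r, z s ^ deg ξ (r + m) (s : ℕ) θ ω) * h (fun s : Fin r => ξ (s : ℕ) ω) ∂P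
      = ∫ ω, (∏ s : Fin r, z s ^ deg ξ r (s : ℕ) θ ω)
          * phi (P.map (ξ 0)) z θ (fun s : Fin r => ξ (s : ℕ) ω) ^ m
          * h (fun s : Fin r => ξ (s : ℕ) ω) ∂P := by
  have hμ : IsProbabilityMeasure (P.map (ξ 0)) :=
    Measure.isProbabilityMeasure_map (hmeas 0).aemeasurable
  set μ : Measure ℝ := P.map (ξ 0) with hμdef
  intro m
  induction m with
  | zero =>
    intro h _ _
    apply integral_congr_ae (Filter.Eventually.of_forall fun ω => ?_)
    simp
  | succ m ih =>
    intro h hh hhb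
    have hle : r ≤ r + m := Nat.le_add_right r m
    have hdeg : ∀ (s : Fin r) (ω : Ω), deg ξ (r + m + 1) (s : ℕ) θ ω
        = deg ξ (r + m) (s : ℕ) θ ω + (if θ < ξ (s : ℕ) ω + ξ (r + m) ω then 1 else 0) := by
      intro s ω
      unfold deg
      rw [Finset.range_add_one, Finset.filter_insert]
      have hns : r + m ≠ (s : ℕ) := by have := s.isLt; omega
      by_cases hc : θ < ξ (s : ℕ) ω + ξ (r + m) ω
      · rw [if_pos ⟨hns, hc⟩, if_pos hc, Finset.card_insert_of_notMem]
        intro hmem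
        exact absurd (Finset.mem_of_mem_filter _ hmem) (by simp)
      · rw [if_neg (fun hh' => hc hh'.2), if_neg hc, add_zero]
    -- the kernel function
    set H : (Fin (r + m) → ℝ) × ℝ → ℝ := fun p =>
      (∏ s : Fin r, z s ^ ((Finset.univ.filter fun ℓ : Fin (r + m) =>
          ℓ ≠ Fin.castLE hle s ∧ θ < p.1 (Fin.castLE hle s) + p.1 ℓ).card))
        * h (fun s : Fin r => p.1 (Fin.castLE hle s))
        * ∏ s : Fin r, (if θ < p.1 (Fin.castLE hle s) + p.2 then z s else 1) with hHdef
    have hf1mem : ∀ v : Fin (r + m) → ℝ, 0 ≤ (∏ s : Fin r, z s ^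
        ((Finset.univ.filter fun ℓ : Fin (r + m) =>
          ℓ ≠ Fin.castLE hle s ∧ θ < v (Fin.castLE hle s) + v ℓ).card))
        ∧ (∏ s : Fin r, z s ^ ((Finset.univ.filter fun ℓ : Fin (r + m) =>
          ℓ ≠ Fin.castLE hle s ∧ θ < v (Fin.castLE hle s) + v ℓ).card)) ≤ 1 := by
      intro v
      constructor
      · exact Finset.prod_nonneg fun s _ => pow_nonneg (hz s).1 _
      · exact Finset.prod_le_one (fun s _ => pow_nonneg (hz s).1 _)
          (fun s _ => pow_le_one₀ (hz s).1 (hz s).2)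
    have hf3mem : ∀ (v : Fin (r + m) → ℝ) (y : ℝ),
        0 ≤ (∏ s : Fin r, (if θ < v (Fin.castLE hle s) + y then z s else 1))
        ∧ (∏ s : Fin r, (if θ < v (Fin.castLE hle s) + y then z s else 1)) ≤ 1 := by
      intro v y
      constructor
      · exact Finset.prod_nonneg fun s _ => by split <;> simp [(hz s).1]
      · exact Finset.prod_le_one (fun s _ => by split <;> simp [(hz s).1])
          (fun s _ => by split <;> simp [(hz s).2])
    have hHmem : ∀ p, 0 ≤ H p ∧ H p ≤ 1 := by
      intro p
      obtain ⟨h1a, h1b⟩ := hf1mem p.1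
      obtain ⟨h3a, h3b⟩ := hf3mem p.1 p.2
      obtain ⟨h2a, h2b⟩ := hhb (fun s : Fin r => p.1 (Fin.castLE hle s))
      constructor
      · exact mul_nonneg (mul_nonneg h1a h2a) h3a
      · exact mul_le_one₀ (mul_le_one₀ h1b h2a h2b) h3a h3b
    have hHb : ∀ p, |H p| ≤ 1 := fun p => abs_le.2 ⟨by linarith [(hHmem p).1], (hHmem p).2⟩
    have hH : Measurable H := by
      apply Measurable.mul
      apply Measurable.mul
      · apply Finset.measurable_prod
        intro s _
        have : (fun p : (Fin (r + m) → ℝ) × ℝ => z s ^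
            ((Finset.univ.filter fun ℓ : Fin (r + m) =>
              ℓ ≠ Fin.castLE hle s ∧ θ < p.1 (Fin.castLE hle s) + p.1 ℓ).card))
            = fun p => ∏ ℓ : Fin (r + m),
              if ℓ ≠ Fin.castLE hle s ∧ θ < p.1 (Fin.castLE hle s) + p.1 ℓ then z s else 1 := by
          funext p
          rw [pow_card_filter]
        rw [this]
        apply Finset.measurable_prod
        intro ℓ _
        have hset : MeasurableSet {p : (Fin (r + m) → ℝ) × ℝ |
            ℓ ≠ Fin.castLE hle s ∧ θ < p.1 (Fin.castLE hle s) + p.1 ℓ} := by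
          have : {p : (Fin (r + m) → ℝ) × ℝ |
              ℓ ≠ Fin.castLE hle s ∧ θ < p.1 (Fin.castLE hle s) + p.1 ℓ}
              = {p : (Fin (r + m) → ℝ) × ℝ | ℓ ≠ Fin.castLE hle s}
                ∩ {p | θ < p.1 (Fin.castLE hle s) + p.1 ℓ} := rfl
          rw [this]
          apply MeasurableSet.inter
          · exact MeasurableSet.const _
          · apply measurableSet_lt measurable_const
            fun_prop
        exact Measurable.ite hset measurable_const measurable_const
      · exact hh.comp (measurable_pi_lambda _ fun s => measurable_fst.eval)
      · apply Finset.measurable_prod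
        intro s _
        exact Measurable.ite
          (measurableSet_lt measurable_const (measurable_fst.eval.add measurable_snd))
          measurable_const measurable_const
    -- rewrite the card in terms of deg
    have hcard : ∀ (s : Fin r) (ω : Ω),
        ((Finset.univ.filter fun ℓ : Fin (r + m) =>
          ℓ ≠ Fin.castLE hle s ∧ θ < ξ (s : ℕ) ω + ξ (ℓ : ℕ) ω).card)
          = deg ξ (r + m) (s : ℕ) θ ω := by
      intro s ω
      have h4 := (deg_eq_fin ξ (r + m) (Fin.castLE hle s) θ ω).symm
      simpa [Fin.coe_castLE] using h4
    calc ∫ ω, (∏ s : Fin r, z s ^ deg ξ (r + (m+1)) (s : ℕ) θ ω)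
            * h (fun s : Fin r => ξ (s : ℕ) ω) ∂P
        = ∫ ω, H (fun i : Fin (r + m) => ξ (i : ℕ) ω, ξ (r + m) ω) ∂P := by
          apply integral_congr_ae (Filter.Eventually.of_forall fun ω => ?_)
          show (∏ s : Fin r, z s ^ deg ξ (r + (m+1)) (s : ℕ) θ ω)
            * h (fun s : Fin r => ξ (s : ℕ) ω) = _
          have e1 : ∀ s : Fin r, z s ^ deg ξ (r + (m+1)) (s : ℕ) θ ω
              = z s ^ deg ξ (r + m) (s : ℕ) θ ω
                * (if θ < ξ (s : ℕ) ω + ξ (r + m) ω then z s else 1) := by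
            intro s
            rw [show r + (m+1) = r + m + 1 from rfl, hdeg s ω, pow_add]
            congr 1
            split <;> simp
          rw [Finset.prod_congr rfl fun s _ => e1 s, Finset.prod_mul_distrib]
          simp only [hHdef]
          simp only [Fin.coe_castLE]
          simp only [hcard]
          ring
      _ = ∫ ω, ∫ y, H (fun i : Fin (r + m) => ξ (i : ℕ) ω, y) ∂μ ∂P :=
          factor_step P ξ hmeas hindep hident (r + m) H hH hHb
      _ = ∫ ω, (∏ s : Fin r, z s ^ deg ξ (r + m) (s : ℕ) θ ω)
            * ((fun u => h u * phi μ z θ u) (fun s : Fin r => ξ (s : ℕ) ω)) ∂P := by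
          apply integral_congr_ae (Filter.Eventually.of_forall fun ω => ?_)
          have : ∀ y : ℝ, H (fun i : Fin (r + m) => ξ (i : ℕ) ω, y)
              = ((∏ s : Fin r, z s ^ deg ξ (r + m) (s : ℕ) θ ω)
                  * h (fun s : Fin r => ξ (s : ℕ) ω))
                * ∏ s : Fin r, (if θ < ξ (s : ℕ) ω + y then z s else 1) := by
            intro y
            simp only [hHdef, Fin.coe_castLE]
            simp only [hcard]
          rw [integral_congr_ae (Filter.Eventually.of_forall this), integral_const_mul]
          show _ = (∏ s : Fin r, z s ^ deg ξ (r + m) (s : ℕ) θ ω)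
            * (h (fun s : Fin r => ξ (s : ℕ) ω) * phi μ z θ (fun s : Fin r => ξ (s : ℕ) ω))
          unfold phi
          ring
      _ = ∫ ω, (∏ s : Fin r, z s ^ deg ξ r (s : ℕ) θ ω)
            * phi μ z θ (fun s : Fin r => ξ (s : ℕ) ω) ^ m
            * ((fun u => h u * phi μ z θ u) (fun s : Fin r => ξ (s : ℕ) ω)) ∂P := by
          exact ih (fun u => h u * phi μ z θ u)
            (hh.mul (phi_measurable μ z θ))
            (fun u => ⟨mul_nonneg (hhb u).1 (phi_mem μ z hz θ u).1,
              mul_le_one₀ (hhb u).2 (phi_mem μ z hz θ u).1 (phi_mem μ z hz θ u).2⟩)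
      _ = ∫ ω, (∏ s : Fin r, z s ^ deg ξ r (s : ℕ) θ ω)
            * phi μ z θ (fun s : Fin r => ξ (s : ℕ) ω) ^ (m + 1)
            * h (fun s : Fin r => ξ (s : ℕ) ω) ∂P := by
          apply integral_congr_ae (Filter.Eventually.of_forall fun ω => ?_)
          simp only [pow_succ]
          ring

/-- Under Assumption A, the joint probability generating
function of the degrees of nodes `1, …, r` converges:
for `0 ≤ z_s ≤ 1`,
`E[∏_s z_s^{D_{n,s}(θ*_n)}] →
 E[exp(−∑_t (1 − z_{α_r(t)}) (∏_{s>t} z_{α_r(s)}) λ(ξ_{r|t}))]`,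
where `α_r = Tuple.sort (ξ_1, …, ξ_r)` is the sorting permutation
(ties broken lexicographically) and `ξ_{r|t} = ξ_{α_r(t)}` are the order
statistics. -/
theorem stmt8
    {Ω : Type*} [MeasurableSpace Ω] (P : Measure Ω) [IsProbabilityMeasure P]
    (ξ : ℕ → Ω → ℝ) (hmeas : ∀ i, Measurable (ξ i))
    (hindep : iIndepFun ξ P)
    (hident : ∀ i, IdentDistrib (ξ i) (ξ 0) P P)
    (hξnn : ∀ i ω, 0 ≤ ξ i ω)
    (F : ℝ → ℝ) (hF : ∀ x, F x = (P {ω | ξ 0 ω ≤ x}).toReal)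
    (hFcont : Continuous F) (hF0 : ∀ x ≤ (0 : ℝ), F x = 0)
    -- Assumption A
    (θstar : ℕ → ℝ) (hθpos : ∀ n, 0 < θstar n)
    (hθtop : Tendsto θstar atTop atTop)
    (lam : ℝ → ℝ) (hlamnn : ∀ x, 0 ≤ x → 0 ≤ lam x)
    (hlamne : ∃ x, 0 ≤ x ∧ lam x ≠ 0)
    (hA : ∀ x, 0 ≤ x →
      Tendsto (fun n : ℕ => (n : ℝ) * (1 - F (θstar n - x))) atTop (𝓝 (lam x))) :
    ∀ r : ℕ, 1 ≤ r → ∀ z : Fin r → ℝ, (∀ s, 0 ≤ z s ∧ z s ≤ 1) →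
      Tendsto
        (fun n : ℕ => ∫ ω, ∏ s : Fin r, z s ^ deg ξ n (s : ℕ) (θstar n) ω ∂P)
        atTop
        (𝓝 (∫ ω,
          Real.exp (-(∑ t : Fin r,
            (1 - z (Tuple.sort (fun s : Fin r => ξ (s : ℕ) ω) t)) *
            (∏ s ∈ Finset.univ.filter fun s : Fin r => t < s,
              z (Tuple.sort (fun s : Fin r => ξ (s : ℕ) ω) s)) *
            lam (ξ ((Tuple.sort (fun s : Fin r => ξ (s : ℕ) ω) t : Fin r) : ℕ) ω))) ∂P)) := by
  intro r hr z hz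
  have hμP : IsProbabilityMeasure (P.map (ξ 0)) :=
    Measure.isProbabilityMeasure_map (hmeas 0).aemeasurable
  set μ : Measure ℝ := P.map (ξ 0) with hμdef
  -- tail probability
  have key : ∀ a : ℝ, (μ (Set.Ioi a)).toReal = 1 - F a := by
    intro a
    have h1 : μ (Set.Iic a) = P {ω | ξ 0 ω ≤ a} := by
      rw [hμdef, Measure.map_apply (hmeas 0) measurableSet_Iic]
      rfl
    have h2 : μ (Set.Ioi a) = 1 - μ (Set.Iic a) := by
      rw [← Set.compl_Iic, measure_compl measurableSet_Iic (measure_ne_top μ _), measure_univ]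
    rw [h2, ENNReal.toReal_sub_of_le prob_le_one ENNReal.one_ne_top, ENNReal.toReal_one,
      h1, hF a]
  -- the simplified sequence
  set G : ℕ → Ω → ℝ := fun n ω =>
    (∏ s : Fin r, z s ^ deg ξ r (s : ℕ) (θstar n) ω)
      * phi μ z (θstar n) (fun s : Fin r => ξ (s : ℕ) ω) ^ (n - r) with hGdef
  -- eventual equality of the integrals
  have hEq : ∀ᶠ n : ℕ in atTop,
      (∫ ω, G n ω ∂P) = ∫ ω, ∏ s : Fin r, z s ^ deg ξ n (s : ℕ) (θstar n) ω ∂P := by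
    filter_upwards [eventually_ge_atTop r] with n hn
    have h0 := factor_main P ξ hmeas hindep hident z hz (θstar n) (n - r)
      (fun _ => 1) measurable_const (fun u => by norm_num)
    rw [Nat.add_sub_cancel' hn] at h0
    rw [← hμdef] at h0
    simp only [mul_one] at h0
    exact (h0.symm : _)
  -- bounds for the prefactor
  have hpre_mem : ∀ (θ : ℝ) (ω : Ω),
      0 ≤ (∏ s : Fin r, z s ^ deg ξ r (s : ℕ) θ ω)
      ∧ (∏ s : Fin r, z s ^ deg ξ r (s : ℕ) θ ω) ≤ 1 := by
    intro θ ω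
    exact ⟨Finset.prod_nonneg fun s _ => pow_nonneg (hz s).1 _,
      Finset.prod_le_one (fun s _ => pow_nonneg (hz s).1 _)
        (fun s _ => pow_le_one₀ (hz s).1 (hz s).2)⟩
  -- measurability of the prefactor
  have hpre_meas : ∀ θ : ℝ, Measurable fun ω => ∏ s : Fin r, z s ^ deg ξ r (s : ℕ) θ ω := by
    intro θ
    apply Finset.measurable_prod
    intro s _
    have he : (fun ω => z s ^ deg ξ r (s : ℕ) θ ω)
        = fun ω => ∏ ℓ ∈ Finset.range r,
            if ℓ ≠ (s : ℕ) ∧ θ < ξ (s : ℕ) ω + ξ ℓ ω then z s else 1 := by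
      funext ω
      unfold deg
      rw [pow_card_filter]
    rw [he]
    apply Finset.measurable_prod
    intro ℓ _
    refine Measurable.ite ?_ measurable_const measurable_const
    have : {ω : Ω | ℓ ≠ (s : ℕ) ∧ θ < ξ (s : ℕ) ω + ξ ℓ ω}
        = {ω : Ω | ℓ ≠ (s : ℕ)} ∩ {ω | θ < ξ (s : ℕ) ω + ξ ℓ ω} := rfl
    rw [this]
    exact (MeasurableSet.const _).inter
      (measurableSet_lt measurable_const ((hmeas _).add (hmeas _)))
  -- pointwise convergence
  have hlim : ∀ ω : Ω, Tendsto (fun n => G n ω) atTop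
      (𝓝 (Real.exp (-(∑ t : Fin r,
            (1 - z (Tuple.sort (fun s : Fin r => ξ (s : ℕ) ω) t)) *
            (∏ s ∈ Finset.univ.filter fun s : Fin r => t < s,
              z (Tuple.sort (fun s : Fin r => ξ (s : ℕ) ω) s)) *
            lam (ξ ((Tuple.sort (fun s : Fin r => ξ (s : ℕ) ω) t : Fin r) : ℕ) ω))))) := by
    intro ω
    set u : Fin r → ℝ := fun s : Fin r => ξ (s : ℕ) ω with hudef
    set σ : Equiv.Perm (Fin r) := Tuple.sort u with hσdef
    -- the prefactor tends to 1
    have hpre1 : ∀ᶠ n : ℕ in atTop,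
        (∏ s : Fin r, z s ^ deg ξ r (s : ℕ) (θstar n) ω) = 1 := by
      have hall : ∀ᶠ n : ℕ in atTop, ∀ p ∈ Finset.range r ×ˢ Finset.range r,
          ξ p.1 ω + ξ p.2 ω < θstar n :=
        (Finset.eventually_all (Finset.range r ×ˢ Finset.range r)).2 fun p _ => hθtop.eventually_gt_atTop _
      filter_upwards [hall] with n hn
      have hdeg0 : ∀ s : Fin r, deg ξ r (s : ℕ) (θstar n) ω = 0 := by
        intro s
        unfold deg
        rw [Finset.card_eq_zero, Finset.filter_eq_empty_iff]
        intro ℓ hℓ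
        rintro ⟨-, hlt⟩
        have hp := hn ((s : ℕ), ℓ) (by
          simp only [Finset.mem_product, Finset.mem_range]
          exact ⟨s.isLt, Finset.mem_range.1 hℓ⟩)
        exact absurd hlt (not_lt.2 (le_of_lt hp))
      simp [hdeg0]
    have hpre_t : Tendsto (fun n => ∏ s : Fin r, z s ^ deg ξ r (s : ℕ) (θstar n) ω)
        atTop (𝓝 1) :=
      Tendsto.congr' (by filter_upwards [hpre1] with n hn; exact hn.symm) tendsto_const_nhds
    -- φ part
    set C : Fin r → ℝ := fun t => (1 - z (σ t)) * ∏ s ∈ Finset.Ioi t, z (σ s) with hCdef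
    set a : ℕ → ℝ := fun n => 1 - phi μ z (θstar n) u with hadef
    have haf : ∀ n, a n = ∑ t : Fin r, C t * (1 - F (θstar n - u (σ t))) := by
      intro n
      show 1 - phi μ z (θstar n) u = _
      rw [phi_eq μ z hz (θstar n) u, sub_sub_cancel]
      apply Finset.sum_congr rfl
      intro t _
      rw [key]
    have ha0 : ∀ n, 0 ≤ a n := fun n => by
      have := (phi_mem μ z hz (θstar n) u).2
      show (0:ℝ) ≤ 1 - phi μ z (θstar n) u; linarith
    have ha1 : ∀ n, a n ≤ 1 := fun n => by
      have := (phi_mem μ z hz (θstar n) u).1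
      show 1 - phi μ z (θstar n) u ≤ 1; linarith
    set S : ℝ := ∑ t : Fin r, C t * lam (u (σ t)) with hSdef
    have hna : Tendsto (fun n : ℕ => (n : ℝ) * a n) atTop (𝓝 S) := by
      have : ∀ n : ℕ, (n : ℝ) * a n = ∑ t : Fin r, C t * ((n : ℝ) * (1 - F (θstar n - u (σ t)))) := by
        intro n
        rw [haf n, Finset.mul_sum]
        apply Finset.sum_congr rfl
        intro t _
        ring
      rw [funext this]
      apply tendsto_finset_sum
      intro t _
      exact (hA (u (σ t)) (hξnn _ ω)).const_mul (C t)
    have hphi_t : Tendsto (fun n : ℕ => phi μ z (θstar n) u ^ (n - r)) atTop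
        (𝓝 (Real.exp (-S))) := by
      have h1 := tendsto_pow_exp_aux (r := r) ha0 ha1 hna
      apply h1.congr
      intro n
      show (1 - (1 - phi μ z (θstar n) u)) ^ (n - r) = _
      rw [sub_sub_cancel]
    -- identify S with the target sum
    have hSeq : S = ∑ t : Fin r,
        (1 - z (Tuple.sort (fun s : Fin r => ξ (s : ℕ) ω) t)) *
        (∏ s ∈ Finset.univ.filter fun s : Fin r => t < s,
          z (Tuple.sort (fun s : Fin r => ξ (s : ℕ) ω) s)) *
        lam (ξ ((Tuple.sort (fun s : Fin r => ξ (s : ℕ) ω) t : Fin r) : ℕ) ω) := by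
      rw [hSdef]
      apply Finset.sum_congr rfl
      intro t _
      have hIoi : Finset.univ.filter (fun s : Fin r => t < s) = Finset.Ioi t := by
        ext s
        simp
      rw [hIoi, hCdef]
    have := hpre_t.mul hphi_t
    rw [one_mul] at this
    rw [hSeq] at this
    exact this
  -- dominated convergence
  have hDCT := tendsto_integral_of_dominated_convergence (μ := P)
    (F := G) (bound := fun _ => (1 : ℝ))
    (f := fun ω => Real.exp (-(∑ t : Fin r,
            (1 - z (Tuple.sort (fun s : Fin r => ξ (s : ℕ) ω) t)) *
            (∏ s ∈ Finset.univ.filter fun s : Fin r => t < s,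
              z (Tuple.sort (fun s : Fin r => ξ (s : ℕ) ω) s)) *
            lam (ξ ((Tuple.sort (fun s : Fin r => ξ (s : ℕ) ω) t : Fin r) : ℕ) ω))))
    (fun n => by
      apply Measurable.aestronglyMeasurable
      exact (hpre_meas (θstar n)).mul
        (((phi_measurable μ z (θstar n)).comp
          (measurable_pi_lambda _ fun s => hmeas (s : ℕ))).pow_const _))
    (integrable_const 1)
    (fun n => by
      filter_upwards with ω
      rw [Real.norm_eq_abs, abs_le]
      have h1 := hpre_mem (θstar n) ω
      have h2 := phi_mem μ z hz (θstar n) (fun s : Fin r => ξ (s : ℕ) ω)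
      constructor
      · have : 0 ≤ G n ω := mul_nonneg h1.1 (pow_nonneg h2.1 _)
        linarith
      · exact mul_le_one₀ h1.2 (pow_nonneg h2.1 _) (pow_le_one₀ h2.1 h2.2))
    (Filter.Eventually.of_forall hlim)
  exact hDCT.congr' hEq
end

section
/- Fix r ≥ 1, θ > 0, z_1, …, z_r ∈ ℝ and x_1, …, x_r ∈ ℝ₊ with x_s ≤ θ for every s. Let x_{(r|1)} ≤ … ≤ x_{(r|r)} be the values x_1, …, x_r arranged in increasing order, let a_r be a permutation of {1,…,r} with x_{(r|s)} = x_{a_r(s)} for all s, and adopt the conventions F(θ − x_{(r|0)}) = 1 and F(θ − x_{(r|r+1)}) = 0. Then F_r(θ; z_1,…,z_r; x_1,…,x_r) = Σ_{t=0}^{r} (Π_{s=t+1}^r z_{a_r(s)}) · (F(θ − x_{(r|t)}) − F(θ − x_{(r|t+1)})), where the empty product is 1. -/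
open MeasureTheory ProbabilityTheory Filter Real
open scoped Topology ENNReal

/-- `F_r(θ; z_1,…,z_r; x_1,…,x_r) = E[∏_{s=1}^r (1 − (1 − z_s) 1{x_s + ξ > θ})]`,
where `ξ` is a random variable on `(Ω, P)`. -/
noncomputable def Fr {Ω : Type*} [MeasurableSpace Ω] (P : Measure Ω) (ξ : Ω → ℝ)
    (r : ℕ) (θ : ℝ) (z x : Fin r → ℝ) : ℝ :=
  ∫ ω, ∏ s : Fin r, (1 - (1 - z s) * (if θ < x s + ξ ω then 1 else 0)) ∂P

/-- If `x_s ≤ θ` for every `s` (the index set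
`S(θ;x)` is empty), then, with `a = Tuple.sort x` the sorting permutation
(`x_{(r|t)} = x_{a(t)}`) and with the conventions `F(θ − x_{(r|0)}) = 1` and
`F(θ − x_{(r|r+1)}) = 0` (encoded in the function `g`),
`F_r(θ; z; x) = Σ_{t=0}^r (∏_{s=t+1}^r z_{a(s)}) (F(θ − x_{(r|t)}) − F(θ − x_{(r|t+1)}))`. -/
theorem stmt11
    {Ω : Type*} [MeasurableSpace Ω] (P : Measure Ω) [IsProbabilityMeasure P]
    (ξ : Ω → ℝ) (hmeas : Measurable ξ) (hξnn : ∀ ω, 0 ≤ ξ ω)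
    (F : ℝ → ℝ) (hF : ∀ x, F x = (P {ω | ξ ω ≤ x}).toReal)
    (hFcont : Continuous F) (hF0 : ∀ x ≤ (0 : ℝ), F x = 0)
    (r : ℕ) (hr : 1 ≤ r) (θ : ℝ) (hθ : 0 < θ)
    (z x : Fin r → ℝ) (hx : ∀ s, 0 ≤ x s) (hxθ : ∀ s, x s ≤ θ)
    -- `g t = F(θ − x_{(r|t)})` for `t = 0, 1, …, r+1`, with the conventions
    -- `g 0 = 1` and `g (r+1) = 0`.
    (g : ℕ → ℝ) (hg0 : g 0 = 1)
    (hg : ∀ t : Fin r, g ((t : ℕ) + 1) = F (θ - x (Tuple.sort x t)))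
    (hgr : g (r + 1) = 0) :
    Fr P ξ r θ z x
      = ∑ t ∈ Finset.range (r + 1),
          (∏ s ∈ Finset.univ.filter fun s : Fin r => t ≤ (s : ℕ),
            z (Tuple.sort x s)) * (g t - g (t + 1)) := by
  classical
  set σ := Tuple.sort x with hσ
  set y : Fin r → ℝ := x ∘ σ with hydef
  have hy : Monotone y := Tuple.monotone_sort x
  set N : ℝ → ℕ := fun v => (Finset.univ.filter (fun u : Fin r => y u + v ≤ θ)).card with hN
  -- key combinatorial fact
  have key : ∀ v (s : Fin r), θ < y s + v ↔ N v ≤ (s : ℕ) := by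
    intro v s
    constructor
    · intro hs
      have hsub : Finset.univ.filter (fun u : Fin r => y u + v ≤ θ) ⊆ Finset.Iio s := by
        intro u hu
        simp only [Finset.mem_filter, Finset.mem_univ, true_and] at hu
        rw [Finset.mem_Iio]
        by_contra h
        push_neg at h
        exact absurd hs (not_lt.2 (le_trans (add_le_add (hy h) le_rfl) hu))
      have := Finset.card_le_card hsub
      rwa [Fin.card_Iio] at this
    · intro hs
      by_contra h
      push_neg at h
      have hsub : Finset.Iic s ⊆ Finset.univ.filter (fun u : Fin r => y u + v ≤ θ) := by
        intro u hu
        simp only [Finset.mem_filter, Finset.mem_univ, true_and]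
        rw [Finset.mem_Iic] at hu
        exact le_trans (add_le_add (hy hu) le_rfl) h
      have := Finset.card_le_card hsub
      rw [Fin.card_Iic] at this
      simp only [hN] at hs
      omega
  have hNr : ∀ v, N v ≤ r := by
    intro v
    simpa using Finset.card_filter_le (Finset.univ : Finset (Fin r))
      (fun u : Fin r => y u + v ≤ θ)
  set D : ℕ → Set Ω := fun t => {ω | N (ξ ω) ≤ t} with hD
  set A : ℕ → Set Ω := fun t => {ω | N (ξ ω) = t} with hA
  have hDlt : ∀ t, ∀ ht : t < r, D t = ξ ⁻¹' Set.Ioi (θ - y ⟨t, ht⟩) := by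
    intro t ht
    ext ω
    have := (key (ξ ω) ⟨t, ht⟩).symm
    simp only [hD, Set.mem_setOf_eq, Set.mem_preimage, Set.mem_Ioi]
    rw [sub_lt_iff_lt_add']
    exact this
  have hDr : ∀ t, r ≤ t → D t = Set.univ := by
    intro t ht
    ext ω
    simp only [hD, Set.mem_setOf_eq, Set.mem_univ, iff_true]
    exact le_trans (hNr (ξ ω)) ht
  have hDmeas : ∀ t, MeasurableSet (D t) := by
    intro t
    by_cases ht : t < r
    · rw [hDlt t ht]; exact hmeas measurableSet_Ioi
    · rw [hDr t (not_lt.1 ht)]; exact MeasurableSet.univ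
  have hDmono : ∀ t, D t ⊆ D (t + 1) := by
    intro t ω hω
    exact le_trans hω (Nat.le_succ t)
  have hA0 : A 0 = D 0 := by
    ext ω; simp [hA, hD, Nat.le_zero]
  have hAsucc : ∀ t, A (t + 1) = D (t + 1) \ D t := by
    intro t
    ext ω
    simp only [hA, hD, Set.mem_setOf_eq, Set.mem_diff]
    omega
  have hAmeas : ∀ t, MeasurableSet (A t) := by
    intro t
    cases t with
    | zero => rw [hA0]; exact hDmeas 0
    | succ t => rw [hAsucc]; exact (hDmeas (t + 1)).diff (hDmeas t)
  -- measure of D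
  have hPD : ∀ t, t ≤ r → (P (D t)).toReal = 1 - g (t + 1) := by
    intro t ht
    rcases lt_or_eq_of_le ht with ht' | ht'
    · rw [hDlt t ht']
      have hgc : g (t + 1) = F (θ - y ⟨t, ht'⟩) := hg ⟨t, ht'⟩
      set c := θ - y ⟨t, ht'⟩
      have hcs : {ω | ξ ω ≤ c} = (ξ ⁻¹' Set.Ioi c)ᶜ := by
        ext ω; simp [not_lt]
      have hFc : F c = 1 - (P (ξ ⁻¹' Set.Ioi c)).toReal := by
        rw [hF, hcs, prob_compl_eq_one_sub (hmeas measurableSet_Ioi),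
          ENNReal.toReal_sub_of_le prob_le_one ENNReal.one_ne_top, ENNReal.toReal_one]
      rw [hgc]
      linarith
    · rw [hDr t (le_of_eq ht'.symm), ht', hgr]
      simp
  -- measure of A
  have hPA : ∀ t, t ≤ r → (P (A t)).toReal = g t - g (t + 1) := by
    intro t ht
    cases t with
    | zero =>
      rw [hA0, hPD 0 (by omega), hg0]
    | succ t =>
      rw [hAsucc, measure_diff (hDmono t) ((hDmeas t).nullMeasurableSet)
          (measure_ne_top P _),
        ENNReal.toReal_sub_of_le (measure_mono (hDmono t)) (measure_ne_top P _),
        hPD (t + 1) ht, hPD t (by omega)]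
      ring
  -- the weight
  set W : ℕ → ℝ := fun t => ∏ s ∈ Finset.univ.filter (fun s : Fin r => t ≤ (s : ℕ)), z (σ s)
    with hW
  -- pointwise identity
  have hpt : ∀ ω, (∏ s : Fin r, (1 - (1 - z s) * (if θ < x s + ξ ω then 1 else 0)))
      = ∑ t ∈ Finset.range (r + 1), Set.indicator (A t) (fun _ => W t) ω := by
    intro ω
    have h1 : (∏ s : Fin r, (1 - (1 - z s) * (if θ < x s + ξ ω then 1 else 0)))
        = ∏ s : Fin r, (1 - (1 - z (σ s)) * (if θ < x (σ s) + ξ ω then 1 else 0)) :=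
      (Equiv.prod_comp σ _).symm
    have h2 : ∀ s : Fin r, (1 - (1 - z (σ s)) * (if θ < x (σ s) + ξ ω then 1 else 0))
        = if N (ξ ω) ≤ (s : ℕ) then z (σ s) else 1 := by
      intro s
      have hxy : x (σ s) = y s := rfl
      rw [hxy]
      simp only [key (ξ ω) s]
      split_ifs <;> ring
    have h3 : ∀ t, Set.indicator (A t) (fun _ => W t) ω
        = if N (ξ ω) = t then W t else 0 := by
      intro t
      rw [Set.indicator_apply]
      congr 1
    rw [h1]
    simp_rw [h2]
    rw [← Finset.prod_filter]
    simp_rw [h3]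
    rw [Finset.sum_ite_eq (Finset.range (r + 1)) (N (ξ ω)) W,
      if_pos (Finset.mem_range.2 (by have := hNr (ξ ω); omega))]
  -- put it together
  have hint : Fr P ξ r θ z x
      = ∑ t ∈ Finset.range (r + 1), ∫ ω, Set.indicator (A t) (fun _ => W t) ω ∂P := by
    rw [Fr]
    rw [integral_congr_ae (Eventually.of_forall hpt)]
    exact integral_finset_sum _ (fun t _ => (integrable_const (W t)).indicator (hAmeas t))
  rw [hint]
  refine Finset.sum_congr rfl (fun t ht => ?_)
  rw [integral_indicator_const (W t) (hAmeas t), smul_eq_mul, measureReal_def,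
    hPA t (Nat.lt_succ_iff.1 (Finset.mem_range.1 ht)), mul_comm]
end

section
/- Suppose Assumption A holds. Fix r ≥ 1, x_1, …, x_r ∈ ℝ₊ and z_1, …, z_r ∈ [0,1]. Let x_{(r|1)} ≤ … ≤ x_{(r|r)} be the ordered values and a_r a sorting permutation with x_{(r|s)} = x_{a_r(s)}. Then lim_{n→∞} F_r(θ*_n; z_1,…,z_r; x_1,…,x_r)^{n−r} = exp( − Σ_{t=1}^r λ(x_{(r|t)}) (1 − z_{a_r(t)}) Π_{s=t+1}^r z_{a_r(s)} ), where the empty product is 1. -/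
open MeasureTheory ProbabilityTheory Filter Real
open scoped Topology ENNReal

lemma telescope (r : ℕ) (u : Fin r → ℝ) :
    ∏ s : Fin r, u s
      = 1 - ∑ t : Fin r, (1 - u t) * ∏ s ∈ Finset.univ.filter (fun s : Fin r => t < s), u s := by
  set g : ℕ → ℝ := fun i => ∏ s ∈ Finset.univ.filter (fun s : Fin r => i ≤ (s : ℕ)), u s with hg
  have hgr : g r = 1 := by
    rw [hg]
    have : Finset.univ.filter (fun s : Fin r => r ≤ (s : ℕ)) = ∅ := by
      apply Finset.filter_false_of_mem
      intro s _
      exact Nat.not_le.mpr s.isLt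
    simp [this]
  have hg0 : g 0 = ∏ s : Fin r, u s := by simp [hg]
  have key : ∀ t : Fin r, (1 - u t) * ∏ s ∈ Finset.univ.filter (fun s : Fin r => t < s), u s
      = g ((t : ℕ) + 1) - g (t : ℕ) := by
    intro t
    have h1 : Finset.univ.filter (fun s : Fin r => ((t:ℕ)+1 : ℕ) ≤ (s : ℕ))
        = Finset.univ.filter (fun s : Fin r => t < s) := by
      apply Finset.filter_congr
      intro s _
      rw [Fin.lt_def]
      omega
    have h2 : Finset.univ.filter (fun s : Fin r => ((t:ℕ) : ℕ) ≤ (s : ℕ))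
        = insert t (Finset.univ.filter (fun s : Fin r => t < s)) := by
      ext s
      simp only [Finset.mem_filter, Finset.mem_univ, true_and, Finset.mem_insert, Fin.lt_def,
        Fin.ext_iff]
      omega
    have hnot : t ∉ Finset.univ.filter (fun s : Fin r => t < s) := by simp
    rw [hg]
    simp only [h1, h2, Finset.prod_insert hnot]
    ring
  have hsum : ∑ t : Fin r, (1 - u t) * ∏ s ∈ Finset.univ.filter (fun s : Fin r => t < s), u s
      = g r - g 0 := by
    calc ∑ t : Fin r, (1 - u t) * ∏ s ∈ Finset.univ.filter (fun s : Fin r => t < s), u s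
        = ∑ t : Fin r, (g ((t:ℕ) + 1) - g (t:ℕ)) := by
          exact Finset.sum_congr rfl fun t _ => key t
      _ = ∑ i ∈ Finset.range r, (g (i + 1) - g i) :=
          Fin.sum_univ_eq_sum_range (fun i => g (i+1) - g i) r
      _ = g r - g 0 := Finset.sum_range_sub g r
  rw [hsum, hgr, hg0]
  ring

lemma Fr_formula {Ω : Type*} [MeasurableSpace Ω] (P : Measure Ω) [IsProbabilityMeasure P]
    (ξ : Ω → ℝ) (hmeas : Measurable ξ) (r : ℕ) (θ : ℝ) (z x : Fin r → ℝ)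
    (F : ℝ → ℝ) (hF : ∀ y, F y = (P {ω | ξ ω ≤ y}).toReal) :
    Fr P ξ r θ z x = 1 - ∑ t : Fin r,
      ((1 - z (Tuple.sort x t)) *
        ∏ s ∈ Finset.univ.filter (fun s : Fin r => t < s), z (Tuple.sort x s)) *
      (1 - F (θ - x (Tuple.sort x t))) := by
  classical
  set a := Tuple.sort x with ha
  have hmono : Monotone (x ∘ a) := Tuple.monotone_sort x
  set A : Fin r → Set Ω := fun t => {ω | θ - x (a t) < ξ ω} with hAdef
  have hAmeas : ∀ t, MeasurableSet (A t) := fun t =>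
    measurableSet_lt measurable_const hmeas
  -- pointwise identity
  have hpt : ∀ ω, ∏ s : Fin r, (1 - (1 - z s) * (if θ < x s + ξ ω then 1 else 0))
      = 1 - ∑ t : Fin r,
          ((1 - z (a t)) * ∏ s ∈ Finset.univ.filter (fun s : Fin r => t < s), z (a s)) *
            (A t).indicator (fun _ => (1:ℝ)) ω := by
    intro ω
    have hre : ∏ s : Fin r, (1 - (1 - z s) * (if θ < x s + ξ ω then 1 else 0))
        = ∏ s : Fin r, (1 - (1 - z (a s)) * (if θ < x (a s) + ξ ω then 1 else 0)) :=
      (Equiv.prod_comp a fun s => (1 - (1 - z s) * (if θ < x s + ξ ω then 1 else 0))).symm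
    rw [hre, telescope]
    congr 1
    apply Finset.sum_congr rfl
    intro t _
    by_cases h : θ < x (a t) + ξ ω
    · have hmem : ω ∈ A t := by simp only [hAdef, Set.mem_setOf_eq]; linarith
      have hprod : ∏ s ∈ Finset.univ.filter (fun s : Fin r => t < s),
          (1 - (1 - z (a s)) * (if θ < x (a s) + ξ ω then 1 else 0))
          = ∏ s ∈ Finset.univ.filter (fun s : Fin r => t < s), z (a s) := by
        apply Finset.prod_congr rfl
        intro s hs
        have hts : t < s := (Finset.mem_filter.mp hs).2
        have hxle : x (a t) ≤ x (a s) := hmono hts.le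
        have : θ < x (a s) + ξ ω := by linarith
        simp [this]
      rw [hprod, Set.indicator_of_mem hmem]
      simp [h]
    · have hmem : ω ∉ A t := by simp only [hAdef, Set.mem_setOf_eq]; intro hc; apply h; linarith
      rw [Set.indicator_of_notMem hmem]
      simp [h]
  -- integrate
  have hint : ∀ t : Fin r, Integrable (fun ω =>
      ((1 - z (a t)) * ∏ s ∈ Finset.univ.filter (fun s : Fin r => t < s), z (a s)) *
        (A t).indicator (fun _ => (1:ℝ)) ω) P := by
    intro t
    exact ((integrable_const (1:ℝ)).indicator (hAmeas t)).const_mul _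
  have hPA : ∀ t : Fin r, (P (A t)).toReal = 1 - F (θ - x (a t)) := by
    intro t
    have hcompl : A t = {ω | ξ ω ≤ θ - x (a t)}ᶜ := by
      ext ω; simp [hAdef, not_le]
    have hm : MeasurableSet {ω | ξ ω ≤ θ - x (a t)} := measurableSet_le hmeas measurable_const
    rw [hcompl, prob_compl_eq_one_sub hm, hF]
    rw [ENNReal.toReal_sub_of_le prob_le_one ENNReal.one_ne_top]
    simp
  calc Fr P ξ r θ z x
      = ∫ ω, (1 - ∑ t : Fin r,
          ((1 - z (a t)) * ∏ s ∈ Finset.univ.filter (fun s : Fin r => t < s), z (a s)) *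
            (A t).indicator (fun _ => (1:ℝ)) ω) ∂P := by
        unfold Fr; exact integral_congr_ae (Filter.Eventually.of_forall hpt)
    _ = 1 - ∑ t : Fin r,
          ((1 - z (a t)) * ∏ s ∈ Finset.univ.filter (fun s : Fin r => t < s), z (a s)) *
            (1 - F (θ - x (a t))) := by
        rw [integral_sub (integrable_const 1) (integrable_finset_sum _ (fun t _ => hint t))]
        rw [integral_finset_sum _ (fun t _ => hint t)]
        simp only [integral_const, measure_univ, probReal_univ, smul_eq_mul, one_mul]
        congr 1
        apply Finset.sum_congr rfl
        intro t _
        rw [integral_const_mul, integral_indicator_const _ (hAmeas t), smul_eq_mul, mul_one]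
        exact congrArg _ (hPA t)

/-- Under Assumption A, for fixed `x_1,…,x_r ∈ ℝ₊` and
`z_1,…,z_r ∈ [0,1]`, with `a = Tuple.sort x` the sorting permutation
(`x_{(r|t)} = x_{a(t)}`),
`F_r(θ*_n; z; x)^{n−r} → exp(−Σ_{t=1}^r λ(x_{(r|t)})(1 − z_{a(t)}) ∏_{s=t+1}^r z_{a(s)})`. -/
theorem stmt12
    {Ω : Type*} [MeasurableSpace Ω] (P : Measure Ω) [IsProbabilityMeasure P]
    (ξ : Ω → ℝ) (hmeas : Measurable ξ) (hξnn : ∀ ω, 0 ≤ ξ ω)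
    (F : ℝ → ℝ) (hF : ∀ x, F x = (P {ω | ξ ω ≤ x}).toReal)
    (hFcont : Continuous F) (hF0 : ∀ x ≤ (0 : ℝ), F x = 0)
    -- Assumption A
    (θstar : ℕ → ℝ) (hθpos : ∀ n, 0 < θstar n)
    (hθtop : Tendsto θstar atTop atTop)
    (lam : ℝ → ℝ) (hlamnn : ∀ x, 0 ≤ x → 0 ≤ lam x)
    (hlamne : ∃ x, 0 ≤ x ∧ lam x ≠ 0)
    (hA : ∀ x, 0 ≤ x →
      Tendsto (fun n : ℕ => (n : ℝ) * (1 - F (θstar n - x))) atTop (𝓝 (lam x)))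
    (r : ℕ) (hr : 1 ≤ r)
    (z x : Fin r → ℝ) (hx : ∀ s, 0 ≤ x s) (hz : ∀ s, 0 ≤ z s ∧ z s ≤ 1) :
    Tendsto (fun n : ℕ => (Fr P ξ r (θstar n) z x) ^ (n - r)) atTop
      (𝓝 (Real.exp (-(∑ t : Fin r,
        lam (x (Tuple.sort x t)) * (1 - z (Tuple.sort x t)) *
          ∏ s ∈ Finset.univ.filter fun s : Fin r => t < s, z (Tuple.sort x s))))) := by
  classical
  set a := Tuple.sort x with ha
  set c : Fin r → ℝ := fun t =>
    (1 - z (a t)) * ∏ s ∈ Finset.univ.filter (fun s : Fin r => t < s), z (a s) with hc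
  have hcnn : ∀ t, 0 ≤ c t := by
    intro t
    apply mul_nonneg (by linarith [(hz (a t)).2])
    exact Finset.prod_nonneg fun s _ => (hz (a s)).1
  set D : ℕ → ℝ := fun n => ∑ t : Fin r, c t * (1 - F (θstar n - x (a t))) with hD
  have hFrD : ∀ n, Fr P ξ r (θstar n) z x = 1 - D n := fun n =>
    Fr_formula P ξ hmeas r (θstar n) z x F hF
  set L : ℝ := ∑ t : Fin r, c t * lam (x (a t)) with hL
  have hgoalL : (∑ t : Fin r,
      lam (x (a t)) * (1 - z (a t)) *
        ∏ s ∈ Finset.univ.filter (fun s : Fin r => t < s), z (a s)) = L := by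
    apply Finset.sum_congr rfl
    intro t _
    simp only [hc]
    ring
  have hF1 : ∀ y : ℝ, F y ≤ 1 := by
    intro y
    rw [hF]
    exact ENNReal.toReal_le_of_le_ofReal zero_le_one (by simpa using prob_le_one)
  have hDnn : ∀ n, 0 ≤ D n := by
    intro n
    apply Finset.sum_nonneg
    intro t _
    exact mul_nonneg (hcnn t) (by linarith [hF1 (θstar n - x (a t))])
  have hnD : Tendsto (fun n : ℕ => (n : ℝ) * D n) atTop (𝓝 L) := by
    have heq : (fun n : ℕ => (n : ℝ) * D n)
        = fun n : ℕ => ∑ t : Fin r, c t * ((n : ℝ) * (1 - F (θstar n - x (a t)))) := by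
      funext n
      rw [hD, Finset.mul_sum]
      exact Finset.sum_congr rfl fun t _ => by ring
    rw [heq, hL]
    exact tendsto_finset_sum _ fun t _ => (hA (x (a t)) (hx (a t))).const_mul (c t)
  have hD0 : Tendsto D atTop (𝓝 0) := by
    have h1 : Tendsto (fun n : ℕ => ((n : ℝ) * D n) * ((n : ℝ))⁻¹) atTop (𝓝 (L * 0)) :=
      hnD.mul tendsto_inv_atTop_nhds_zero_nat
    rw [mul_zero] at h1
    apply h1.congr'
    filter_upwards [eventually_ge_atTop 1] with n hn
    have : (n : ℝ) ≠ 0 := by positivity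
    field_simp
  set b : ℕ → ℝ := fun n => 1 - D n with hb
  have hb1 : Tendsto b atTop (𝓝 1) := by
    have := tendsto_const_nhds.sub hD0 (f := fun _ : ℕ => (1:ℝ))
    simpa using this
  have hbhalf : ∀ᶠ n in atTop, (1:ℝ)/2 ≤ b n :=
    hb1.eventually (eventually_ge_nhds (by norm_num : (1:ℝ)/2 < 1))
  have hnr : Tendsto (fun n : ℕ => ((n - r : ℕ) : ℝ) * (b n - 1)) atTop (𝓝 (-L)) := by
    have h1 : Tendsto (fun n : ℕ => -((n : ℝ) * D n - (r : ℝ) * D n)) atTop (𝓝 (-L)) := by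
      have := (hnD.sub (hD0.const_mul (r : ℝ))).neg
      simpa using this
    apply h1.congr'
    filter_upwards [eventually_ge_atTop r] with n hn
    rw [Nat.cast_sub hn, hb]
    ring
  have hdiv : Tendsto (fun n : ℕ => ((n - r : ℕ) : ℝ) * (b n - 1) / b n) atTop (𝓝 (-L)) := by
    have h := hnr.div hb1 one_ne_zero
    rw [div_one] at h
    exact h
  have hlog : Tendsto (fun n : ℕ => ((n - r : ℕ) : ℝ) * Real.log (b n)) atTop (𝓝 (-L)) := by
    apply tendsto_of_tendsto_of_tendsto_of_le_of_le' hdiv hnr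
    · filter_upwards [hbhalf] with n hn
      have hbpos : 0 < b n := lt_of_lt_of_le (by norm_num) hn
      have hlow : (b n - 1) / b n ≤ Real.log (b n) := by
        have h2 := Real.log_le_sub_one_of_pos (inv_pos.mpr hbpos)
        rw [Real.log_inv] at h2
        have : 1 - (b n)⁻¹ ≤ Real.log (b n) := by linarith
        calc (b n - 1) / b n = 1 - (b n)⁻¹ := by field_simp
          _ ≤ Real.log (b n) := this
      calc ((n - r : ℕ) : ℝ) * (b n - 1) / b n
          = ((n - r : ℕ) : ℝ) * ((b n - 1) / b n) := by ring
        _ ≤ ((n - r : ℕ) : ℝ) * Real.log (b n) :=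
            mul_le_mul_of_nonneg_left hlow (Nat.cast_nonneg _)
    · filter_upwards [hbhalf] with n hn
      have hbpos : 0 < b n := lt_of_lt_of_le (by norm_num) hn
      exact mul_le_mul_of_nonneg_left (Real.log_le_sub_one_of_pos hbpos) (Nat.cast_nonneg _)
  have hexp : Tendsto (fun n : ℕ => Real.exp (((n - r : ℕ) : ℝ) * Real.log (b n))) atTop
      (𝓝 (Real.exp (-L))) := (Real.continuous_exp.tendsto _).comp hlog
  rw [hgoalL]
  apply hexp.congr'
  filter_upwards [hbhalf] with n hn
  have hbpos : 0 < b n := lt_of_lt_of_le (by norm_num) hn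
  rw [Real.exp_nat_mul, Real.exp_log hbpos, hFrD n]
end

section
/- Under Assumption A, for every d ∈ ℕ there is no constant L(d) ∈ ℝ such that P_n(d;θ*_n) converges in probability to L(d) as n → ∞. -/
open MeasureTheory ProbabilityTheory Filter Real
open scoped Topology ENNReal

/-- Number of nodes of degree `d` in the random threshold graph. -/
noncomputable def Ncount {Ω : Type*} (ξ : ℕ → Ω → ℝ) (n d : ℕ) (θ : ℝ) (ω : Ω) : ℕ :=
  ((Finset.range n).filter fun k => deg ξ n k θ ω = d).card

/-- Real-analysis lower bound for the binomial-type probability. -/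
lemma binom_lower (p q : ℕ → ℝ) (μ Λ : ℝ) (hμpos : 0 < μ) (hΛnn : 0 ≤ Λ)
    (hp0 : ∀ n, 0 ≤ p n) (hq0 : ∀ n, 0 ≤ q n) (hq1 : ∀ n, q n ≤ 1)
    (hp : Filter.Tendsto (fun n : ℕ => (n : ℝ) * p n) atTop (𝓝 μ))
    (hq : Filter.Tendsto (fun n : ℕ => (n : ℝ) * (1 - q n)) atTop (𝓝 Λ)) (j : ℕ) :
    ∃ ε0 > (0:ℝ), ∀ᶠ n : ℕ in atTop,
      ε0 ≤ (n.choose j : ℝ) * p n ^ j * q n ^ (n - j) := by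
  classical
  set κ := Real.exp (-(Λ + 1)) with hκ
  have hκpos : 0 < κ := Real.exp_pos _
  refine ⟨(μ / 2) ^ j / (j.factorial : ℝ) * (κ / 2), by positivity, ?_⟩
  -- step 1 : eventually q n ^ (n - j) ≥ κ / 2
  have hqev : ∀ᶠ n : ℕ in atTop, κ / 2 ≤ q n ^ (n - j) := by
    have h1 : ∀ᶠ n : ℕ in atTop, (n : ℝ) * (1 - q n) ≤ Λ + 1 :=
      hq.eventually_le_const (by linarith)
    have h2 : Filter.Tendsto (fun n : ℕ => (1 + (-(Λ + 1)) / (n : ℝ)) ^ n) atTop (𝓝 κ) :=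
      Real.tendsto_one_add_div_pow_exp (-(Λ + 1))
    have h3 : ∀ᶠ n : ℕ in atTop, κ / 2 ≤ (1 + (-(Λ + 1)) / (n : ℝ)) ^ n :=
      h2.eventually_const_le (by linarith)
    have h4 : ∀ᶠ n : ℕ in atTop, (Λ + 1) / (n : ℝ) ≤ 1 := by
      have := tendsto_natCast_atTop_atTop (R := ℝ)
      filter_upwards [this.eventually_ge_atTop (Λ + 1), this.eventually_gt_atTop 0] with n hn hn0
      rw [div_le_one hn0]; exact hn
    filter_upwards [h1, h3, h4, (tendsto_natCast_atTop_atTop (R := ℝ)).eventually_gt_atTop 0]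
      with n hn1 hn3 hn4 hn0
    have hbase : 1 + (-(Λ + 1)) / (n : ℝ) ≤ q n := by
      have : 1 - q n ≤ (Λ + 1) / n := by
        rw [div_eq_inv_mul, ← mul_le_mul_iff_right₀ hn0, ← mul_assoc, mul_inv_cancel₀ hn0.ne', one_mul]
        exact hn1
      have : -( (Λ+1) / n) ≤ q n - 1 := by linarith
      have := neg_div (n:ℝ) (Λ+1) ▸ this
      linarith [this]
    have hbase0 : 0 ≤ 1 + (-(Λ + 1)) / (n : ℝ) := by
      rw [neg_div]; linarith [hn4]
    calc κ / 2 ≤ (1 + (-(Λ + 1)) / (n : ℝ)) ^ n := hn3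
      _ ≤ q n ^ n := pow_le_pow_left₀ hbase0 hbase n
      _ ≤ q n ^ (n - j) := pow_le_pow_of_le_one (hq0 n) (hq1 n) (Nat.sub_le n j)
  -- step 2 : eventually choose * p^j ≥ (μ/2)^j / j!
  have hchoose : ∀ᶠ n : ℕ in atTop,
      (μ / 2) ^ j / (j.factorial : ℝ) ≤ (n.choose j : ℝ) * p n ^ j := by
    have hnp : Filter.Tendsto (fun n : ℕ => ((n : ℝ) - j + 1) * p n) atTop (𝓝 μ) := by
      have hp0' : Filter.Tendsto (fun n : ℕ => p n) atTop (𝓝 0) := by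
        have hinv : Filter.Tendsto (fun n : ℕ => ((n : ℝ))⁻¹) atTop (𝓝 0) :=
          tendsto_inv_atTop_zero.comp (tendsto_natCast_atTop_atTop (R := ℝ))
        have h0 : Filter.Tendsto (fun n : ℕ => ((n : ℝ) * p n) * ((n:ℝ))⁻¹) atTop (𝓝 (μ * 0)) :=
          hp.mul hinv
        rw [mul_zero] at h0
        apply h0.congr'
        filter_upwards [Filter.eventually_ge_atTop 1] with n hn
        have hn0 : (n : ℝ) ≠ 0 := by positivity
        field_simp
      have h9 : Filter.Tendsto (fun n : ℕ => (n:ℝ) * p n + (1 - (j:ℝ)) * p n) atTop (𝓝 (μ + (1 - (j:ℝ)) * 0)) :=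
        hp.add (hp0'.const_mul _)
      rw [mul_zero, add_zero] at h9
      exact h9.congr (fun n => by ring)
    have h5 : ∀ᶠ n : ℕ in atTop, μ / 2 ≤ ((n : ℝ) - j + 1) * p n :=
      hnp.eventually_const_le (by linarith)
    filter_upwards [h5, Filter.eventually_ge_atTop (j + 1)] with n hn5 hnj
    have hkey : ((n : ℝ) - j + 1) ^ j ≤ (n.choose j : ℝ) * (j.factorial : ℝ) := by
      have h6 : (n + 1 - j) ^ j ≤ n.descFactorial j := Nat.pow_sub_le_descFactorial n j
      have h7 : n.descFactorial j = j.factorial * n.choose j :=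
        Nat.descFactorial_eq_factorial_mul_choose n j
      have h8 : ((n + 1 - j : ℕ) : ℝ) = (n : ℝ) - j + 1 := by
        have : j ≤ n := le_of_lt (Nat.lt_of_lt_of_le (Nat.lt_succ_self j) hnj)
        have h' : j ≤ n + 1 := this.trans (Nat.le_succ n)
        push_cast [Nat.cast_sub h']
        ring
      calc ((n : ℝ) - j + 1) ^ j = (((n + 1 - j : ℕ) : ℝ)) ^ j := by rw [h8]
        _ ≤ ((n.descFactorial j : ℕ) : ℝ) := by exact_mod_cast (by exact_mod_cast h6 : ((n+1-j)^j : ℕ) ≤ _) 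
        _ = (n.choose j : ℝ) * (j.factorial : ℝ) := by rw [h7]; push_cast; ring
    have hppos : 0 ≤ p n := hp0 n
    have : (μ / 2) ^ j ≤ (((n : ℝ) - j + 1) * p n) ^ j :=
      pow_le_pow_left₀ (by linarith) hn5 j
    rw [mul_pow] at this
    have hfac : (0:ℝ) < j.factorial := by exact_mod_cast j.factorial_pos
    rw [div_le_iff₀ hfac]
    calc (μ / 2) ^ j ≤ ((n:ℝ) - j + 1) ^ j * p n ^ j := this
      _ ≤ (n.choose j : ℝ) * (j.factorial : ℝ) * p n ^ j := by
          apply mul_le_mul_of_nonneg_right hkey (pow_nonneg hppos j)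
      _ = (n.choose j : ℝ) * p n ^ j * (j.factorial : ℝ) := by ring
  filter_upwards [hqev, hchoose] with n h1 h2
  have hq0' : 0 ≤ q n ^ (n - j) := pow_nonneg (hq0 n) _
  calc (μ / 2) ^ j / (j.factorial : ℝ) * (κ / 2)
      ≤ ((n.choose j : ℝ) * p n ^ j) * (q n ^ (n - j)) := by
        apply mul_le_mul h2 h1 (by positivity)
          (mul_nonneg (Nat.cast_nonneg _) (pow_nonneg (hp0 n) j))
    _ = (n.choose j : ℝ) * p n ^ j * q n ^ (n - j) := by ring

section Meas
variable {Ω : Type*} [MeasurableSpace Ω] (P : Measure Ω) [IsProbabilityMeasure P]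
  (ξ : ℕ → Ω → ℝ)

lemma measA (hmeas : ∀ i, Measurable (ξ i))
    (hindep : iIndepFun ξ P)
    (hident : ∀ i, IdentDistrib (ξ i) (ξ 0) P P)
    (B : Set ℝ) (hB : MeasurableSet B) (t : ℝ) {n : ℕ} {S : Finset ℕ}
    (hS : S ⊆ Finset.range n) :
    P (⋂ k ∈ Finset.range n, (if k ∈ S then ξ k ⁻¹' B else ξ k ⁻¹' Set.Iic t))
      = P (ξ 0 ⁻¹' B) ^ S.card * P (ξ 0 ⁻¹' Set.Iic t) ^ (n - S.card) := by
  classical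
  rw [hindep.meas_biInter (fun i _ => ?_)]
  · have hfac : ∀ k ∈ Finset.range n,
        P (if k ∈ S then ξ k ⁻¹' B else ξ k ⁻¹' Set.Iic t)
          = if k ∈ S then P (ξ 0 ⁻¹' B) else P (ξ 0 ⁻¹' Set.Iic t) := by
      intro k _
      by_cases h : k ∈ S
      · simp only [h, if_true]; exact (hident k).measure_mem_eq hB
      · simp only [h, if_false]; exact (hident k).measure_mem_eq measurableSet_Iic
    rw [Finset.prod_congr rfl hfac, ← Finset.prod_sdiff hS]
    have e1 : (∏ x ∈ S, if x ∈ S then P (ξ 0 ⁻¹' B) else P (ξ 0 ⁻¹' Set.Iic t))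
        = P (ξ 0 ⁻¹' B) ^ S.card := by
      rw [Finset.prod_congr rfl (fun x hx => if_pos hx), Finset.prod_const]
    have e2 : (∏ x ∈ Finset.range n \ S, if x ∈ S then P (ξ 0 ⁻¹' B) else P (ξ 0 ⁻¹' Set.Iic t))
        = P (ξ 0 ⁻¹' Set.Iic t) ^ (n - S.card) := by
      rw [Finset.prod_congr rfl (fun x hx => if_neg (Finset.mem_sdiff.1 hx).2),
        Finset.prod_const, Finset.card_sdiff_of_subset hS, Finset.card_range]
    rw [e1, e2, mul_comm]
  · by_cases h : i ∈ S
    · simp only [h, if_true]; exact ⟨B, hB, rfl⟩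
    · simp only [h, if_false]; exact ⟨Set.Iic t, measurableSet_Iic, rfl⟩

lemma measEv (hmeas : ∀ i, Measurable (ξ i))
    (hindep : iIndepFun ξ P)
    (hident : ∀ i, IdentDistrib (ξ i) (ξ 0) P P)
    (B : Set ℝ) (hB : MeasurableSet B) (t : ℝ) (hBt : ∀ x ∈ B, t < x) (n j : ℕ) :
    P (⋃ S ∈ (Finset.range n).powersetCard j,
        ⋂ k ∈ Finset.range n, (if k ∈ S then ξ k ⁻¹' B else ξ k ⁻¹' Set.Iic t))
      = (n.choose j) * P (ξ 0 ⁻¹' B) ^ j * P (ξ 0 ⁻¹' Set.Iic t) ^ (n - j) := by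
  classical
  rw [measure_biUnion_finset ?_ ?_]
  · have : ∀ S ∈ (Finset.range n).powersetCard j,
        P (⋂ k ∈ Finset.range n, (if k ∈ S then ξ k ⁻¹' B else ξ k ⁻¹' Set.Iic t))
          = P (ξ 0 ⁻¹' B) ^ j * P (ξ 0 ⁻¹' Set.Iic t) ^ (n - j) := by
      intro S hS
      rw [Finset.mem_powersetCard] at hS
      rw [measA P ξ hmeas hindep hident B hB t hS.1, hS.2]
    rw [Finset.sum_congr rfl this, Finset.sum_const, Finset.card_powersetCard,
      Finset.card_range, nsmul_eq_mul, mul_assoc]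
  · -- pairwise disjoint
    intro S hS T hT hST
    rw [Finset.mem_coe, Finset.mem_powersetCard] at hS hT
    have hkey : ∃ k, (k ∈ S ∧ k ∉ T) ∨ (k ∈ T ∧ k ∉ S) := by
      by_contra hc
      push_neg at hc
      apply hST
      ext k
      constructor
      · intro hk; exact (hc k).1 hk
      · intro hk; exact (hc k).2 hk
    obtain ⟨k, hk⟩ := hkey
    apply Set.disjoint_left.2
    intro ω hωS hωT
    have hmem : ∀ (U : Finset ℕ), U ⊆ Finset.range n → U.card = j →
        ω ∈ ⋂ k ∈ Finset.range n, (if k ∈ U then ξ k ⁻¹' B else ξ k ⁻¹' Set.Iic t) →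
        ∀ i ∈ Finset.range n, (i ∈ U → ξ i ω ∈ B) ∧ (i ∉ U → ξ i ω ≤ t) := by
      intro U hU hUc hω i hi
      have := Set.mem_iInter₂.1 hω i hi
      constructor
      · intro hiU; rwa [if_pos hiU] at this
      · intro hiU; rwa [if_neg hiU] at this
    rcases hk with ⟨hkS, hkT⟩ | ⟨hkT, hkS⟩
    · have h1 := (hmem S hS.1 hS.2 hωS k (hS.1 hkS)).1 hkS
      have h2 := (hmem T hT.1 hT.2 hωT k (hS.1 hkS)).2 hkT
      exact absurd h2 (not_le.2 (hBt _ h1))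
    · have h1 := (hmem T hT.1 hT.2 hωT k (hT.1 hkT)).1 hkT
      have h2 := (hmem S hS.1 hS.2 hωS k (hT.1 hkT)).2 hkS
      exact absurd h2 (not_le.2 (hBt _ h1))
  · -- measurability
    intro S hS
    apply MeasurableSet.biInter (Set.to_countable _)
    intro k _
    by_cases h : k ∈ S
    · rw [if_pos h]; exact (hmeas k) hB
    · rw [if_neg h]; exact (hmeas k) measurableSet_Iic

end Meas

section SLLN
variable {Ω : Type*} [MeasurableSpace Ω] (P : Measure Ω) [IsProbabilityMeasure P]
  (ξ : ℕ → Ω → ℝ)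

lemma slln_ind (hmeas : ∀ i, Measurable (ξ i))
    (hindep : iIndepFun ξ P)
    (hident : ∀ i, IdentDistrib (ξ i) (ξ 0) P P)
    (p : ℝ → Prop) [DecidablePred p] (hs : MeasurableSet {x | p x}) :
    TendstoInMeasure P
      (fun (n : ℕ) ω => (((Finset.range n).filter fun k => p (ξ k ω)).card : ℝ) / n) atTop
      (fun _ => (P (ξ 0 ⁻¹' {x | p x})).toReal) := by
  classical
  set s : Set ℝ := {x | p x} with hsdef
  set f : ℝ → ℝ := s.indicator (fun _ => (1:ℝ)) with hfdef
  have hfmeas : Measurable f := measurable_const.indicator hs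
  set X : ℕ → Ω → ℝ := fun i ω => f (ξ i ω) with hXdef
  have hXmeas : ∀ i, Measurable (X i) := fun i => hfmeas.comp (hmeas i)
  have hXeq : ∀ i, X i = (ξ i ⁻¹' s).indicator (fun _ => (1:ℝ)) := by
    intro i; ext ω
    simp only [hXdef, hfdef, Set.indicator_apply, Set.mem_preimage]
  have hint : Integrable (X 0) P := by
    rw [hXeq 0]
    exact (integrable_indicator_iff ((hmeas 0) hs)).2
      (integrableOn_const (measure_ne_top P _))
  have hindep' : Pairwise (Function.onFun (IndepFun · · P) X) := by
    intro i j hij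
    exact (hindep.indepFun hij).comp hfmeas hfmeas
  have hident' : ∀ i, IdentDistrib (X i) (X 0) P P := fun i => (hident i).comp hfmeas
  have hmean : P[X 0] = (P (ξ 0 ⁻¹' s)).toReal := by
    rw [hXeq 0, integral_indicator_const (1:ℝ) ((hmeas 0) hs), smul_eq_mul, mul_one, measureReal_def]
  have hae := strong_law_ae_real X hint hindep' hident'
  rw [hmean] at hae
  have hcard : ∀ (n : ℕ) (ω : Ω),
      (((Finset.range n).filter fun k => p (ξ k ω)).card : ℝ) = ∑ i ∈ Finset.range n, X i ω := by
    intro n ω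
    rw [Finset.card_filter]
    push_cast
    apply Finset.sum_congr rfl
    intro i _
    simp only [hXdef, hfdef, Set.indicator_apply]
    by_cases h : p (ξ i ω)
    · rw [if_pos h, if_pos (show ξ i ω ∈ s from h)]
    · rw [if_neg h, if_neg (show ξ i ω ∉ s from h)]
  apply tendstoInMeasure_of_tendsto_ae
  · intro n
    apply Measurable.aestronglyMeasurable
    have he : (fun ω => (((Finset.range n).filter fun k => p (ξ k ω)).card : ℝ) / n)
        = fun ω => (∑ i ∈ Finset.range n, X i ω) / n := funext fun ω => by rw [hcard]
    rw [he]
    exact (Finset.measurable_sum _ (fun i _ => hXmeas i)).div_const _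
  · filter_upwards [hae] with ω hω
    apply Tendsto.congr _ hω
    intro n
    rw [hcard]

end SLLN

lemma degs {Ω : Type*} (ξ : ℕ → Ω → ℝ) {n : ℕ} (T w u v x2 : ℝ) (Band : Set ℝ)
    (hwv : w ≤ u) (huv : u ≤ v) (hvx : v ≤ x2)
    (hBmid : ∀ x ∈ Band, T - v < x)
    (hBlow : ∀ x ∈ Band, ∀ y, 0 ≤ y → y ≤ w → y + x ≤ T)
    (hθbig : x2 + v < T)
    {S : Finset ℕ} {ω : Ω} (hSr : S ⊆ Finset.range n)
    (hband : ∀ k ∈ S, ξ k ω ∈ Band)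
    (hrest : ∀ k ∈ Finset.range n, k ∉ S → ξ k ω ≤ T - x2)
    (hξnn : ∀ i, 0 ≤ ξ i ω) :
    (∀ k ∈ Finset.range n, ξ k ω ≤ w → deg ξ n k T ω = 0) ∧
    (∀ k ∈ Finset.range n, v < ξ k ω → ξ k ω ≤ x2 → deg ξ n k T ω = S.card) := by
  constructor
  · intro k _ hkw
    rw [deg, Finset.card_eq_zero, Finset.filter_eq_empty_iff]
    rintro ℓ hℓ ⟨hne, hgt⟩
    by_cases hℓS : ℓ ∈ S
    · exact absurd hgt (not_lt.2 (hBlow _ (hband ℓ hℓS) _ (hξnn k) hkw))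
    · have h1 : ξ ℓ ω ≤ T - x2 := hrest ℓ hℓ hℓS
      have h2 : ξ k ω ≤ x2 := le_trans hkw (le_trans hwv (le_trans huv hvx))
      exact absurd hgt (not_lt.2 (by linarith))
  · intro k _ hkv hkx
    rw [deg]
    congr 1
    apply Finset.ext
    intro ℓ
    rw [Finset.mem_filter]
    constructor
    · rintro ⟨hℓ, _, hgt⟩
      by_contra hℓS
      have h1 : ξ ℓ ω ≤ T - x2 := hrest ℓ hℓ hℓS
      exact absurd hgt (not_lt.2 (by linarith))
    · intro hℓS
      have hBℓ := hband ℓ hℓS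
      have h1 : T - v < ξ ℓ ω := hBmid _ hBℓ
      refine ⟨hSr hℓS, ?_, by linarith⟩
      intro hlk
      rw [hlk] at h1
      linarith

section Helpers
variable {Ω : Type*} [MeasurableSpace Ω] (P : Measure Ω) [IsProbabilityMeasure P]
  (ξ : ℕ → Ω → ℝ)

lemma FIic (hF : ∀ x, (F : ℝ → ℝ) x = (P {ω | ξ 0 ω ≤ x}).toReal) (x : ℝ) :
    (P (ξ 0 ⁻¹' Set.Iic x)).toReal = F x := by rw [hF]; rfl

lemma FIoc (hmeas : ∀ i, Measurable (ξ i))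
    {F : ℝ → ℝ} (hF : ∀ x, F x = (P {ω | ξ 0 ω ≤ x}).toReal) (a b : ℝ) (hab : a ≤ b) :
    (P (ξ 0 ⁻¹' Set.Ioc a b)).toReal = F b - F a := by
  have hdisj : Disjoint (ξ 0 ⁻¹' Set.Iic a) (ξ 0 ⁻¹' Set.Ioc a b) := by
    apply Set.disjoint_left.2
    intro ω h1 h2
    exact absurd h2.1 (not_lt.2 h1)
  have hun : (ξ 0 ⁻¹' Set.Iic a) ∪ (ξ 0 ⁻¹' Set.Ioc a b) = ξ 0 ⁻¹' Set.Iic b := by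
    ext ω
    simp only [Set.mem_union, Set.mem_preimage, Set.mem_Iic, Set.mem_Ioc]
    constructor
    · rintro (h | h)
      · linarith
      · exact h.2
    · intro h
      rcases le_or_gt (ξ 0 ω) a with h' | h'
      · exact Or.inl h'
      · exact Or.inr ⟨h', h⟩
  have hmeq : P (ξ 0 ⁻¹' Set.Iic b) = P (ξ 0 ⁻¹' Set.Iic a) + P (ξ 0 ⁻¹' Set.Ioc a b) := by
    rw [← hun, measure_union hdisj ((hmeas 0) measurableSet_Ioc)]
  have h1 : (P (ξ 0 ⁻¹' Set.Iic b)).toReal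
      = (P (ξ 0 ⁻¹' Set.Iic a)).toReal + (P (ξ 0 ⁻¹' Set.Ioc a b)).toReal := by
    rw [hmeq, ENNReal.toReal_add (measure_ne_top _ _) (measure_ne_top _ _)]
  rw [FIic P ξ hF, FIic P ξ hF] at h1
  linarith

lemma FIoi (hmeas : ∀ i, Measurable (ξ i))
    {F : ℝ → ℝ} (hF : ∀ x, F x = (P {ω | ξ 0 ω ≤ x}).toReal) (a : ℝ) :
    (P (ξ 0 ⁻¹' Set.Ioi a)).toReal = 1 - F a := by
  have hc : ξ 0 ⁻¹' Set.Ioi a = (ξ 0 ⁻¹' Set.Iic a)ᶜ := by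
    ext ω
    simp [not_le]
  rw [hc, prob_compl_eq_one_sub ((hmeas 0) measurableSet_Iic)]
  rw [ENNReal.toReal_sub_of_le prob_le_one ENNReal.one_ne_top, ENNReal.toReal_one, FIic P ξ hF]

end Helpers


lemma engine {Ω : Type*} [MeasurableSpace Ω] (P : Measure Ω) [IsProbabilityMeasure P]
    (ξ : ℕ → Ω → ℝ) (hmeas : ∀ i, Measurable (ξ i))
    (hindep : iIndepFun ξ P)
    (hident : ∀ i, IdentDistrib (ξ i) (ξ 0) P P)
    (hξnn : ∀ i ω, 0 ≤ ξ i ω)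
    (F : ℝ → ℝ) (hF : ∀ x, F x = (P {ω | ξ 0 ω ≤ x}).toReal)
    (θ : ℕ → ℝ) (hθtop : Tendsto θ atTop atTop)
    (w u v x2 γ μ Λ : ℝ) (Band : ℕ → Set ℝ) (hBmeas : ∀ n, MeasurableSet (Band n))
    (hγ : 0 < γ) (hwv : w ≤ u) (huv : u ≤ v) (hvx : v ≤ x2)
    (hFwv : F v - F w < γ/100) (hFv : F v ≤ 1 - γ) (hFx2 : 1 - F x2 < γ/100)
    (hBmid : ∀ n, ∀ x ∈ Band n, θ n - v < x)
    (hBlow : ∀ n, ∀ x ∈ Band n, ∀ y, 0 ≤ y → y ≤ w → y + x ≤ θ n)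
    (hμpos : 0 < μ) (hΛnn : 0 ≤ Λ)
    (hμ : Tendsto (fun n : ℕ => (n:ℝ) * (P (ξ 0 ⁻¹' Band n)).toReal) atTop (𝓝 μ))
    (htail : Tendsto (fun n : ℕ => (n:ℝ) * (1 - F (θ n - x2))) atTop (𝓝 Λ))
    (d : ℕ) (L : ℝ)
    (hL : TendstoInMeasure P (fun (n:ℕ) ω => (Ncount ξ n d (θ n) ω : ℝ)/n) atTop
      (fun _ => L)) :
    False := by
  classical
  set m := max d 1 with hm
  -- measures of band and tail
  set pe : ℕ → ℝ≥0∞ := fun n => P (ξ 0 ⁻¹' Band n) with hpe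
  set qe : ℕ → ℝ≥0∞ := fun n => P (ξ 0 ⁻¹' Set.Iic (θ n - x2)) with hqe
  have hqF : ∀ n, (qe n).toReal = F (θ n - x2) := by
    intro n
    rw [hF]
    rfl
  -- the events
  set Ev : ℕ → ℕ → Set Ω := fun n j =>
    ⋃ S ∈ (Finset.range n).powersetCard j,
      ⋂ k ∈ Finset.range n,
        (if k ∈ S then ξ k ⁻¹' Band n else ξ k ⁻¹' Set.Iic (θ n - x2)) with hEvdef
  have hEv : ∀ n j, P (Ev n j) = (n.choose j) * pe n ^ j * qe n ^ (n - j) := by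
    intro n j
    exact measEv P ξ hmeas hindep hident (Band n) (hBmeas n) (θ n - x2)
      (fun x hx => lt_of_le_of_lt (by linarith [hvx] : θ n - x2 ≤ θ n - v) (hBmid n x hx)) n j
  have hEvReal : ∀ n j, (P (Ev n j)).toReal
      = (n.choose j : ℝ) * (pe n).toReal ^ j * (qe n).toReal ^ (n - j) := by
    intro n j
    rw [hEv n j, ENNReal.toReal_mul, ENNReal.toReal_mul, ENNReal.toReal_pow,
      ENNReal.toReal_pow, ENNReal.toReal_natCast]
  -- lower bounds on P(Ev n j) for j = 0 and j = m
  have hq1 : ∀ n, (qe n).toReal ≤ 1 := fun n => by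
    rw [hqe]
    exact ENNReal.toReal_le_of_le_ofReal zero_le_one (by simpa using prob_le_one)
  have hq0 : ∀ n, 0 ≤ (qe n).toReal := fun n => ENNReal.toReal_nonneg
  have hp0 : ∀ n, 0 ≤ (pe n).toReal := fun n => ENNReal.toReal_nonneg
  have htail' : Tendsto (fun n : ℕ => (n:ℝ) * (1 - (qe n).toReal)) atTop (𝓝 Λ) := by
    apply htail.congr
    intro n
    rw [hqF]
  obtain ⟨ε00, hε00, hev0⟩ := binom_lower (fun n => (pe n).toReal) (fun n => (qe n).toReal)
    μ Λ hμpos hΛnn hp0 hq0 hq1 hμ htail' 0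
  obtain ⟨ε0m, hε0m, hevm⟩ := binom_lower (fun n => (pe n).toReal) (fun n => (qe n).toReal)
    μ Λ hμpos hΛnn hp0 hq0 hq1 hμ htail' m
  set ε0 := min ε00 ε0m with hε0def
  have hε0 : 0 < ε0 := lt_min hε00 hε0m
  -- SLLN for lows and mids
  have hlowmass : (P (ξ 0 ⁻¹' {x : ℝ | x ≤ w})).toReal = F w := by rw [hF]; rfl
  have hmidmass : (P (ξ 0 ⁻¹' {x : ℝ | v < x ∧ x ≤ x2})).toReal = F x2 - F v := by
    have hdisj : Disjoint (ξ 0 ⁻¹' Set.Iic v) (ξ 0 ⁻¹' {x : ℝ | v < x ∧ x ≤ x2}) := by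
      apply Set.disjoint_left.2
      intro ω h1 h2
      exact absurd h2.1 (not_lt.2 h1)
    have hun : (ξ 0 ⁻¹' Set.Iic v) ∪ (ξ 0 ⁻¹' {x : ℝ | v < x ∧ x ≤ x2})
        = ξ 0 ⁻¹' Set.Iic x2 := by
      ext ω
      simp only [Set.mem_union, Set.mem_preimage, Set.mem_Iic, Set.mem_setOf_eq]
      constructor
      · rintro (h | h)
        · linarith
        · exact h.2
      · intro h
        rcases le_or_gt (ξ 0 ω) v with h' | h'
        · exact Or.inl h'
        · exact Or.inr ⟨h', h⟩
    have hmeq : P (ξ 0 ⁻¹' Set.Iic x2)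
        = P (ξ 0 ⁻¹' Set.Iic v) + P (ξ 0 ⁻¹' {x : ℝ | v < x ∧ x ≤ x2}) := by
      rw [← hun, measure_union hdisj ((hmeas 0) (by exact measurableSet_Ioc))]
    have h1 : (P (ξ 0 ⁻¹' Set.Iic x2)).toReal
        = (P (ξ 0 ⁻¹' Set.Iic v)).toReal + (P (ξ 0 ⁻¹' {x : ℝ | v < x ∧ x ≤ x2})).toReal := by
      rw [hmeq, ENNReal.toReal_add (measure_ne_top _ _) (measure_ne_top _ _)]
    have h2 : (P (ξ 0 ⁻¹' Set.Iic x2)).toReal = F x2 := by rw [hF]; rfl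
    have h3 : (P (ξ 0 ⁻¹' Set.Iic v)).toReal = F v := by rw [hF]; rfl
    rw [h2, h3] at h1
    linarith
  have TIM1 := slln_ind P ξ hmeas hindep hident (fun x : ℝ => x ≤ w) measurableSet_Iic
  have TIM2 := slln_ind P ξ hmeas hindep hident (fun x : ℝ => v < x ∧ x ≤ x2)
    (by exact measurableSet_Ioc)
  rw [show {x : ℝ | x ≤ w} = {x : ℝ | (fun x : ℝ => x ≤ w) x} from rfl] at hlowmass
  have hbad1 := (tendstoInMeasure_iff_dist.1 TIM1) (γ/100) (by positivity)
  have hbad2 := (tendstoInMeasure_iff_dist.1 TIM2) (γ/100) (by positivity)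
  have hbadL := (tendstoInMeasure_iff_dist.1 hL) (γ/8) (by positivity)
  -- eventual facts
  have hθev : ∀ᶠ n : ℕ in atTop, x2 + v < θ n := hθtop.eventually_gt_atTop _
  have hcpos : (0:ℝ≥0∞) < ENNReal.ofReal (ε0/4) := ENNReal.ofReal_pos.2 (by positivity)
  have hev1 : ∀ᶠ n : ℕ in atTop,
      P {ω | γ/100 ≤ dist ((((Finset.range n).filter
        fun k => ξ k ω ≤ w).card : ℝ) / n) ((P (ξ 0 ⁻¹' {x : ℝ | x ≤ w})).toReal)}
        < ENNReal.ofReal (ε0/4) := hbad1.eventually_lt_const hcpos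
  have hev2 : ∀ᶠ n : ℕ in atTop,
      P {ω | γ/100 ≤ dist ((((Finset.range n).filter
        fun k => v < ξ k ω ∧ ξ k ω ≤ x2).card : ℝ) / n)
        ((P (ξ 0 ⁻¹' {x : ℝ | v < x ∧ x ≤ x2})).toReal)}
        < ENNReal.ofReal (ε0/4) := hbad2.eventually_lt_const hcpos
  have hevL : ∀ᶠ n : ℕ in atTop,
      P {ω | γ/8 ≤ dist ((Ncount ξ n d (θ n) ω : ℝ)/n) L}
        < ENNReal.ofReal (ε0/4) := hbadL.eventually_lt_const hcpos
  -- pick one good n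
  obtain ⟨n, ⟨⟨⟨⟨⟨h0, hm'⟩, hθn⟩, h1'⟩, h2'⟩, hL'⟩, hn1⟩ :=
    ((((((hev0.and hevm).and hθev).and hev1).and hev2).and hevL).and
      (Filter.eventually_ge_atTop 1)).exists
  have hnpos : (0:ℝ) < (n:ℝ) := by exact_mod_cast hn1
  set S1 : Set Ω := {ω | γ/100 ≤ dist ((((Finset.range n).filter
        fun k => ξ k ω ≤ w).card : ℝ) / n) ((P (ξ 0 ⁻¹' {x : ℝ | x ≤ w})).toReal)} with hS1def
  set S2 : Set Ω := {ω | γ/100 ≤ dist ((((Finset.range n).filter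
        fun k => v < ξ k ω ∧ ξ k ω ≤ x2).card : ℝ) / n)
        ((P (ξ 0 ⁻¹' {x : ℝ | v < x ∧ x ≤ x2})).toReal)} with hS2def
  set SL : Set Ω := {ω | γ/8 ≤ dist ((Ncount ξ n d (θ n) ω : ℝ)/n) L} with hSLdef
  -- extraction of witnesses
  have hkey : ∀ j : ℕ, ε0 ≤ (P (Ev n j)).toReal →
      ∃ ω, ω ∈ Ev n j ∧ ω ∉ S1 ∧ ω ∉ S2 ∧ ω ∉ SL := by
    intro j hj
    have hne : P (Ev n j \ (S1 ∪ S2 ∪ SL)) ≠ 0 := by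
      intro hzero
      have hsub : Ev n j ⊆ (Ev n j \ (S1 ∪ S2 ∪ SL)) ∪ (S1 ∪ S2 ∪ SL) := by
        intro ω hω
        by_cases h : ω ∈ S1 ∪ S2 ∪ SL
        · exact Or.inr h
        · exact Or.inl ⟨hω, h⟩
      have hchain : P (Ev n j) ≤ P (Ev n j \ (S1 ∪ S2 ∪ SL)) + (P (S1 ∪ S2) + P SL) :=
        le_trans (measure_mono hsub) (le_trans (measure_union_le _ _)
          (by exact add_le_add_right (measure_union_le _ _) _))
      rw [hzero, zero_add] at hchain
      have hchain2 : P (Ev n j) ≤ (P S1 + P S2) + P SL :=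
        le_trans hchain (add_le_add_left (measure_union_le _ _) _)
      have hup : P (Ev n j) ≤ ENNReal.ofReal (ε0/4) + ENNReal.ofReal (ε0/4)
          + ENNReal.ofReal (ε0/4) :=
        le_trans hchain2 (add_le_add (add_le_add h1'.le h2'.le) hL'.le)
      have hlow : ENNReal.ofReal ε0 ≤ P (Ev n j) :=
        ENNReal.ofReal_le_of_le_toReal hj
      rw [← ENNReal.ofReal_add (by positivity) (by positivity),
        ← ENNReal.ofReal_add (by positivity) (by positivity)] at hup
      have := (ENNReal.ofReal_le_ofReal_iff (by positivity)).1 (le_trans hlow hup)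
      linarith
    obtain ⟨ω, hω⟩ := nonempty_of_measure_ne_zero hne
    obtain ⟨hωE, hωB⟩ := hω
    simp only [Set.mem_union, not_or] at hωB
    exact ⟨ω, hωE, hωB.1.1, hωB.1.2, hωB.2⟩
  have hj0 : ε0 ≤ (P (Ev n 0)).toReal := by
    rw [hEvReal]; exact le_trans (min_le_left _ _) h0
  have hjm : ε0 ≤ (P (Ev n m)).toReal := by
    rw [hEvReal]; exact le_trans (min_le_right _ _) hm'
  -- per-witness processing
  have process : ∀ j ω, ω ∈ Ev n j → ω ∉ S1 → ω ∉ S2 → ω ∉ SL →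
      (∀ k ∈ Finset.range n, ξ k ω ≤ w → deg ξ n k (θ n) ω = 0) ∧
      (∀ k ∈ Finset.range n, v < ξ k ω → ξ k ω ≤ x2 → deg ξ n k (θ n) ω = j) ∧
      F w - γ/100 < (((Finset.range n).filter fun k => ξ k ω ≤ w).card : ℝ) / n ∧
      (F x2 - F v) - γ/100
        < (((Finset.range n).filter fun k => v < ξ k ω ∧ ξ k ω ≤ x2).card : ℝ) / n ∧
      |(Ncount ξ n d (θ n) ω : ℝ)/n - L| < γ/8 := by
    intro j ω hωE hω1 hω2 hωL
    obtain ⟨S, hS, hmem⟩ := Set.mem_iUnion₂.1 hωE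
    rw [Finset.mem_powersetCard] at hS
    have hband : ∀ k ∈ S, ξ k ω ∈ Band n := by
      intro k hk
      have := Set.mem_iInter₂.1 hmem k (hS.1 hk)
      rwa [if_pos hk] at this
    have hrest : ∀ k ∈ Finset.range n, k ∉ S → ξ k ω ≤ θ n - x2 := by
      intro k hk hk'
      have := Set.mem_iInter₂.1 hmem k hk
      rw [if_neg hk'] at this
      exact this
    obtain ⟨hlowdeg, hmiddeg⟩ := degs ξ (θ n) w u v x2 (Band n) hwv huv hvx
      (hBmid n) (hBlow n) hθn hS.1 hband hrest (fun i => hξnn i ω)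
    rw [hS.2] at hmiddeg
    refine ⟨hlowdeg, hmiddeg, ?_, ?_, ?_⟩
    · rw [hS1def, Set.mem_setOf_eq, not_le, Real.dist_eq, hlowmass] at hω1
      have := abs_lt.1 hω1
      linarith [this.1, this.2]
    · rw [hS2def, Set.mem_setOf_eq, not_le, Real.dist_eq, hmidmass] at hω2
      have := abs_lt.1 hω2
      linarith [this.1, this.2]
    · rw [hSLdef, Set.mem_setOf_eq, not_le, Real.dist_eq] at hωL
      exact hωL
  -- counting bounds
  have cnt1 : ∀ ω j, (∀ k ∈ Finset.range n, v < ξ k ω → ξ k ω ≤ x2 → deg ξ n k (θ n) ω = j) →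
      j = d →
      (((Finset.range n).filter fun k => v < ξ k ω ∧ ξ k ω ≤ x2).card : ℝ)
        ≤ (Ncount ξ n d (θ n) ω : ℝ) := by
    intro ω j hdeg hjd
    rw [Ncount]
    have hsub : ((Finset.range n).filter fun k => v < ξ k ω ∧ ξ k ω ≤ x2)
        ⊆ (Finset.range n).filter fun k => deg ξ n k (θ n) ω = d := by
      intro k hk
      rw [Finset.mem_filter] at hk ⊢
      exact ⟨hk.1, by rw [hdeg k hk.1 hk.2.1 hk.2.2]; exact hjd⟩
    exact_mod_cast Finset.card_le_card hsub
  have cnt2 : ∀ ω j, (∀ k ∈ Finset.range n, v < ξ k ω → ξ k ω ≤ x2 → deg ξ n k (θ n) ω = j) →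
      j ≠ d →
      (Ncount ξ n d (θ n) ω : ℝ)
        ≤ (n:ℝ) - (((Finset.range n).filter fun k => v < ξ k ω ∧ ξ k ω ≤ x2).card : ℝ) := by
    intro ω j hdeg hjd
    rw [Ncount]
    have hsub : ((Finset.range n).filter fun k => deg ξ n k (θ n) ω = d)
        ⊆ Finset.range n \ ((Finset.range n).filter fun k => v < ξ k ω ∧ ξ k ω ≤ x2) := by
      intro k hk
      rw [Finset.mem_filter] at hk
      rw [Finset.mem_sdiff, Finset.mem_filter]
      refine ⟨hk.1, ?_⟩
      rintro ⟨_, hmid⟩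
      exact hjd (by rw [← hdeg k hk.1 hmid.1 hmid.2]; exact hk.2.symm ▸ rfl)
    have := Finset.card_le_card hsub
    rw [Finset.card_sdiff_of_subset (Finset.filter_subset _ _), Finset.card_range] at this
    have hcle : ((Finset.range n).filter fun k => v < ξ k ω ∧ ξ k ω ≤ x2).card ≤ n :=
      le_trans (Finset.card_le_card (Finset.filter_subset _ _)) (le_of_eq (Finset.card_range n))
    have hcast : ((n - ((Finset.range n).filter fun k => v < ξ k ω ∧ ξ k ω ≤ x2).card : ℕ) : ℝ)
        = (n:ℝ) - (((Finset.range n).filter fun k => v < ξ k ω ∧ ξ k ω ≤ x2).card : ℝ) :=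
      Nat.cast_sub hcle
    calc (Ncount ξ n d (θ n) ω : ℝ)
        ≤ ((n - ((Finset.range n).filter fun k => v < ξ k ω ∧ ξ k ω ≤ x2).card : ℕ) : ℝ) := by
          rw [Ncount]; exact_mod_cast this
      _ = _ := hcast
  have cnt3 : ∀ ω, (∀ k ∈ Finset.range n, ξ k ω ≤ w → deg ξ n k (θ n) ω = 0) →
      (∀ k ∈ Finset.range n, v < ξ k ω → ξ k ω ≤ x2 → deg ξ n k (θ n) ω = 0) → d = 0 →
      (((Finset.range n).filter fun k => ξ k ω ≤ w).card : ℝ)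
        + (((Finset.range n).filter fun k => v < ξ k ω ∧ ξ k ω ≤ x2).card : ℝ)
        ≤ (Ncount ξ n d (θ n) ω : ℝ) := by
    intro ω hlowdeg hmiddeg hd
    have hdisj : Disjoint ((Finset.range n).filter fun k => ξ k ω ≤ w)
        ((Finset.range n).filter fun k => v < ξ k ω ∧ ξ k ω ≤ x2) := by
      rw [Finset.disjoint_left]
      intro k hk hk'
      rw [Finset.mem_filter] at hk hk'
      linarith [hk.2, hk'.2.1]
    have hsub : (((Finset.range n).filter fun k => ξ k ω ≤ w)
        ∪ ((Finset.range n).filter fun k => v < ξ k ω ∧ ξ k ω ≤ x2))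
        ⊆ (Finset.range n).filter fun k => deg ξ n k (θ n) ω = d := by
      intro k hk
      rcases Finset.mem_union.1 hk with hk' | hk' <;> rw [Finset.mem_filter] at hk' ⊢
      · exact ⟨hk'.1, by rw [hlowdeg k hk'.1 hk'.2, hd]⟩
      · exact ⟨hk'.1, by rw [hmiddeg k hk'.1 hk'.2.1 hk'.2.2, hd]⟩
    have := Finset.card_le_card hsub
    rw [Finset.card_union_of_disjoint hdisj] at this
    rw [Ncount]
    exact_mod_cast this
  have cnt4 : ∀ ω, (∀ k ∈ Finset.range n, ξ k ω ≤ w → deg ξ n k (θ n) ω = 0) →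
      (∀ k ∈ Finset.range n, v < ξ k ω → ξ k ω ≤ x2 → deg ξ n k (θ n) ω = 0) → d ≠ 0 →
      (Ncount ξ n d (θ n) ω : ℝ)
        ≤ (n:ℝ) - ((((Finset.range n).filter fun k => ξ k ω ≤ w).card : ℝ)
          + (((Finset.range n).filter fun k => v < ξ k ω ∧ ξ k ω ≤ x2).card : ℝ)) := by
    intro ω hlowdeg hmiddeg hd
    have hdisj : Disjoint ((Finset.range n).filter fun k => ξ k ω ≤ w)
        ((Finset.range n).filter fun k => v < ξ k ω ∧ ξ k ω ≤ x2) := by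
      rw [Finset.disjoint_left]
      intro k hk hk'
      rw [Finset.mem_filter] at hk hk'
      linarith [hk.2, hk'.2.1]
    set U := ((Finset.range n).filter fun k => ξ k ω ≤ w)
        ∪ ((Finset.range n).filter fun k => v < ξ k ω ∧ ξ k ω ≤ x2) with hU
    have hUsub : U ⊆ Finset.range n := by
      rw [hU]
      exact Finset.union_subset (Finset.filter_subset _ _) (Finset.filter_subset _ _)
    have hsub : ((Finset.range n).filter fun k => deg ξ n k (θ n) ω = d)
        ⊆ Finset.range n \ U := by
      intro k hk
      rw [Finset.mem_filter] at hk
      rw [Finset.mem_sdiff]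
      refine ⟨hk.1, ?_⟩
      intro hkU
      rcases Finset.mem_union.1 hkU with hk' | hk' <;> rw [Finset.mem_filter] at hk'
      · exact hd (by rw [← hk.2, hlowdeg k hk'.1 hk'.2])
      · exact hd (by rw [← hk.2, hmiddeg k hk'.1 hk'.2.1 hk'.2.2])
    have hcard := Finset.card_le_card hsub
    rw [Finset.card_sdiff_of_subset hUsub, Finset.card_range] at hcard
    have hUle : U.card ≤ n :=
      le_trans (Finset.card_le_card hUsub) (le_of_eq (Finset.card_range n))
    have hcast : ((n - U.card : ℕ) : ℝ) = (n:ℝ) - (U.card : ℝ) := Nat.cast_sub hUle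
    have hUcard : (U.card : ℝ)
        = (((Finset.range n).filter fun k => ξ k ω ≤ w).card : ℝ)
          + (((Finset.range n).filter fun k => v < ξ k ω ∧ ξ k ω ≤ x2).card : ℝ) := by
      rw [hU, Finset.card_union_of_disjoint hdisj]
      push_cast
      ring
    calc (Ncount ξ n d (θ n) ω : ℝ) ≤ ((n - U.card : ℕ) : ℝ) := by
          rw [Ncount]; exact_mod_cast hcard
      _ = (n:ℝ) - (U.card : ℝ) := hcast
      _ = _ := by rw [hUcard]
  -- endgame
  obtain ⟨ω0, hω0E, h01, h02, h0L⟩ := hkey 0 hj0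
  obtain ⟨ωm, hωmE, hm1, hm2, hmL⟩ := hkey m hjm
  obtain ⟨low0deg, mid0deg, c0low, c0mid, c0L⟩ := process 0 ω0 hω0E h01 h02 h0L
  obtain ⟨lowmdeg, midmdeg, cmlow, cmmid, cmL⟩ := process m ωm hωmE hm1 hm2 hmL
  set lc0 : ℝ := (((Finset.range n).filter fun k => ξ k ω0 ≤ w).card : ℝ) with hlc0
  set mc0 : ℝ := (((Finset.range n).filter fun k => v < ξ k ω0 ∧ ξ k ω0 ≤ x2).card : ℝ) with hmc0
  set mcm : ℝ := (((Finset.range n).filter fun k => v < ξ k ωm ∧ ξ k ωm ≤ x2).card : ℝ) with hmcm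
  set lcm : ℝ := (((Finset.range n).filter fun k => ξ k ωm ≤ w).card : ℝ) with hlcm
  set N0 : ℝ := (Ncount ξ n d (θ n) ω0 : ℝ) with hN0
  set Nm : ℝ := (Ncount ξ n d (θ n) ωm : ℝ) with hNm
  obtain ⟨c0La, c0Lb⟩ := abs_lt.1 c0L
  obtain ⟨cmLa, cmLb⟩ := abs_lt.1 cmL
  have hmd : m ≠ 0 := by
    rw [hm]
    exact Nat.one_le_iff_ne_zero.1 (le_max_right d 1)
  by_cases hd : d = 0
  · -- d = 0 : on Ev 0 everything small has degree 0 = d ; on Ev m mids have degree m ≠ 0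
    have hb : lc0 + mc0 ≤ N0 := cnt3 ω0 low0deg (fun k hk h1 h2 => mid0deg k hk h1 h2) hd
    have ha : Nm ≤ (n:ℝ) - mcm := cnt2 ωm m midmdeg (by rw [hd]; exact hmd)
    have hbdiv : (lc0 + mc0)/n ≤ N0/n := by gcongr
    have hadiv : Nm/n ≤ ((n:ℝ) - mcm)/n := by gcongr
    have e1 : (lc0 + mc0)/n = lc0/n + mc0/n := add_div _ _ _
    have e2 : ((n:ℝ) - mcm)/n = 1 - mcm/n := by field_simp
    rw [e1] at hbdiv
    rw [e2] at hadiv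
    linarith
  · -- d ≠ 0 : m = d
    have hmed : m = d := max_eq_left (Nat.one_le_iff_ne_zero.2 hd)
    have hb : mcm ≤ Nm := cnt1 ωm m midmdeg hmed
    have ha : N0 ≤ (n:ℝ) - (lc0 + mc0) := cnt4 ω0 low0deg
      (fun k hk h1 h2 => mid0deg k hk h1 h2) hd
    have hbdiv : mcm/n ≤ Nm/n := by gcongr
    have hadiv : N0/n ≤ ((n:ℝ) - (lc0 + mc0))/n := by gcongr
    have e2 : ((n:ℝ) - (lc0 + mc0))/n = 1 - (lc0/n + mc0/n) := by field_simp
    rw [e2] at hadiv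
    linarith

/-- Under Assumption A, for every `d ∈ ℕ` there is no
constant `L(d)` such that the fraction `P_n(d;θ*_n) = N_n(d;θ*_n)/n`
converges in probability to `L(d)`. -/
theorem stmt17
    {Ω : Type*} [MeasurableSpace Ω] (P : Measure Ω) [IsProbabilityMeasure P]
    (ξ : ℕ → Ω → ℝ) (hmeas : ∀ i, Measurable (ξ i))
    (hindep : iIndepFun ξ P)
    (hident : ∀ i, IdentDistrib (ξ i) (ξ 0) P P)
    (hξnn : ∀ i ω, 0 ≤ ξ i ω)
    (F : ℝ → ℝ) (hF : ∀ x, F x = (P {ω | ξ 0 ω ≤ x}).toReal)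
    (hFcont : Continuous F) (hF0 : ∀ x ≤ (0 : ℝ), F x = 0)
    -- Assumption A
    (θstar : ℕ → ℝ) (hθpos : ∀ n, 0 < θstar n)
    (hθtop : Tendsto θstar atTop atTop)
    (lam : ℝ → ℝ) (hlamnn : ∀ x, 0 ≤ x → 0 ≤ lam x)
    (hlamne : ∃ x, 0 ≤ x ∧ lam x ≠ 0)
    (hA : ∀ x, 0 ≤ x →
      Tendsto (fun n : ℕ => (n : ℝ) * (1 - F (θstar n - x))) atTop (𝓝 (lam x))) :
    ∀ d : ℕ, ¬ ∃ L : ℝ,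
      TendstoInMeasure P
        (fun (n : ℕ) (ω : Ω) => (Ncount ξ n d (θstar n) ω : ℝ) / n) atTop
        (fun _ => L) := by
  classical
  rintro d ⟨L, hL⟩
  obtain ⟨xs, hxs0, hxsne⟩ := hlamne
  have hxspos : 0 < lam xs := lt_of_le_of_ne (hlamnn xs hxs0) (Ne.symm hxsne)
  -- basic facts about F
  have hFmono : Monotone F := by
    intro a b hab
    rw [hF, hF]
    exact ENNReal.toReal_mono (measure_ne_top _ _)
      (measure_mono (fun ω (h : ξ 0 ω ≤ a) => le_trans h hab))
  have hF0le : ∀ x, 0 ≤ F x := fun x => by rw [hF]; exact ENNReal.toReal_nonneg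
  have hFle1 : ∀ x, F x ≤ 1 := fun x => by
    rw [hF]
    exact ENNReal.toReal_le_of_le_ofReal zero_le_one (by simpa using prob_le_one)
  have hFlt1 : ∀ t, F t < 1 := by
    intro t
    have h1 : ∀ᶠ n : ℕ in atTop, lam xs / 2 < (n:ℝ) * (1 - F (θstar n - xs)) :=
      (hA xs hxs0).eventually_const_lt (by linarith)
    have h2 : Tendsto (fun n : ℕ => θstar n - xs) atTop atTop :=
      tendsto_atTop_add_const_right _ (-xs) hθtop
    have h3 : ∀ᶠ n : ℕ in atTop, t ≤ θstar n - xs := h2.eventually_ge_atTop t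
    obtain ⟨n, hn1, hn3, hn4⟩ := (h1.and (h3.and (Filter.eventually_ge_atTop 1))).exists
    have hnpos : (0:ℝ) < n := by exact_mod_cast hn4
    have h5 : 0 < 1 - F (θstar n - xs) := by
      by_contra hc
      push_neg at hc
      nlinarith
    calc F t ≤ F (θstar n - xs) := hFmono hn3
      _ < 1 := by linarith
  have hF1top : Tendsto F atTop (𝓝 1) := by
    set ν := P.map (ξ 0) with hν
    have : IsProbabilityMeasure ν := Measure.isProbabilityMeasure_map (hmeas 0).aemeasurable
    have h1 : Tendsto (fun x => ν (Set.Iic x)) atTop (𝓝 (ν Set.univ)) :=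
      tendsto_measure_Iic_atTop ν
    rw [measure_univ] at h1
    have h2 := (ENNReal.tendsto_toReal ENNReal.one_ne_top).comp h1
    rw [ENNReal.toReal_one] at h2
    apply h2.congr
    intro x
    simp only [Function.comp_apply, hν, Measure.map_apply (hmeas 0) measurableSet_Iic]
    exact FIic P ξ hF x
  have hlammono : ∀ a b, 0 ≤ a → a ≤ b → lam a ≤ lam b := by
    intro a b ha hab
    apply le_of_tendsto_of_tendsto' (hA a ha) (hA b (le_trans ha hab))
    intro n
    have : F (θstar n - b) ≤ F (θstar n - a) := hFmono (by linarith)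
    have hn : (0:ℝ) ≤ n := Nat.cast_nonneg n
    nlinarith
  by_cases hcase : ∀ x, 0 ≤ x → lam x = lam 0
  · -- constant case
    have hl0 : 0 < lam 0 := by rw [← hcase xs hxs0]; exact hxspos
    obtain ⟨x2, hx2F, hx2nn⟩ :=
      ((hF1top.eventually_const_lt (show 1 - ((1:ℝ)/2)/100 < 1 by norm_num)).and
        (Filter.eventually_ge_atTop (0:ℝ))).exists
    refine engine P ξ hmeas hindep hident hξnn F hF θstar hθtop
      (-1) 0 0 x2 (1/2) (lam 0) (lam x2) (fun n => Set.Ioi (θstar n))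
      (fun n => measurableSet_Ioi) (by norm_num) (by norm_num) le_rfl hx2nn
      ?_ ?_ (by linarith) ?_ ?_ hl0 (hlamnn x2 hx2nn) ?_ (hA x2 hx2nn) d L hL
    · rw [hF0 0 le_rfl, hF0 (-1) (by norm_num)]; norm_num
    · rw [hF0 0 le_rfl]; norm_num
    · intro n x hx
      rw [sub_zero]
      exact hx
    · intro n x hx y hy hyw
      linarith
    · have := hA 0 le_rfl
      simp only [sub_zero] at this
      apply this.congr
      intro n
      rw [FIoi P ξ hmeas hF]
  · -- non-constant case : find an increase point
    push_neg at hcase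
    obtain ⟨b, hb0, hbne⟩ := hcase
    have hlb : lam 0 < lam b := lt_of_le_of_ne (hlammono 0 b le_rfl hb0) (Ne.symm hbne)
    -- the set of points where lam is still at its base value
    set A : Set ℝ := {t : ℝ | 0 ≤ t ∧ t ≤ b ∧ lam t ≤ lam 0} with hA'
    have hA0 : (0:ℝ) ∈ A := ⟨le_rfl, hb0, le_rfl⟩
    have hAne : A.Nonempty := ⟨0, hA0⟩
    have hAbdd : BddAbove A := ⟨b, fun t ht => ht.2.1⟩
    set t0 := sSup A with ht0
    have ht00 : 0 ≤ t0 := le_csSup hAbdd hA0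
    have ht0b : t0 ≤ b := csSup_le hAne (fun t ht => ht.2.1)
    have hinc : ∀ ε > (0:ℝ), lam (max (t0 - ε) 0) < lam (t0 + ε) := by
      intro ε hε
      have h2 : lam 0 < lam (t0 + ε) := by
        rcases le_or_gt (t0 + ε) b with hle | hlt
        · have hnotA : (t0 + ε) ∉ A := fun hmem => by
            have := le_csSup hAbdd hmem
            linarith
          have : ¬ (lam (t0 + ε) ≤ lam 0) := fun hc => hnotA ⟨by linarith, hle, hc⟩
          linarith [not_le.1 this]
        · calc lam 0 < lam b := hlb
            _ ≤ lam (t0 + ε) := hlammono b (t0 + ε) hb0 (le_of_lt hlt)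
      have h1 : lam (max (t0 - ε) 0) ≤ lam 0 := by
        rcases le_or_gt (t0 - ε) 0 with hle | hlt
        · rw [max_eq_right hle]
        · rw [max_eq_left (le_of_lt hlt)]
          obtain ⟨t, htA, htgt⟩ := exists_lt_of_lt_csSup hAne (by linarith : t0 - ε < t0)
          calc lam (t0 - ε) ≤ lam t := hlammono _ _ (le_of_lt hlt) (le_of_lt htgt)
            _ ≤ lam 0 := htA.2.2
      linarith
    -- choose parameters
    set γ := 1 - F (t0 + 1) with hγdef
    have hγpos : 0 < γ := by
      have := hFlt1 (t0 + 1)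
      linarith
    obtain ⟨δ0, hδ0pos, hδ0⟩ := Metric.continuous_iff.1 hFcont t0 (γ/300) (by positivity)
    set δ := min (δ0/2) 1 with hδdef
    have hδpos : 0 < δ := lt_min (by linarith) one_pos
    have hδ1 : δ ≤ 1 := min_le_right _ _
    set w := max (t0 - δ) 0 with hwdef
    set v := t0 + δ with hvdef
    have hδF : ∀ x, |x - t0| ≤ δ → |F x - F t0| < γ/300 := by
      intro x hx
      have : dist x t0 < δ0 := by
        rw [Real.dist_eq]
        calc |x - t0| ≤ δ := hx
          _ ≤ δ0/2 := min_le_left _ _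
          _ < δ0 := by linarith
      have h2 := hδ0 x this
      rwa [Real.dist_eq] at h2
    have hFw : |F w - F t0| < γ/300 := by
      apply hδF
      rw [abs_le]
      constructor
      · have : t0 - δ ≤ w := le_max_left _ _
        linarith
      · rcases le_or_gt (t0 - δ) 0 with h | h
        · rw [hwdef, max_eq_right h]; linarith
        · rw [hwdef, max_eq_left (le_of_lt h)]; linarith
    have hFv : |F v - F t0| < γ/300 := by
      apply hδF
      rw [hvdef]
      simp [abs_of_nonneg (le_of_lt hδpos)]
    have hwv : w ≤ v := by
      apply max_le <;> [linarith; linarith]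
    have hlamwv : lam w < lam v := hinc δ hδpos
    have hw0 : 0 ≤ w := le_max_right _ _
    have hv0 : 0 ≤ v := by linarith
    obtain ⟨x2, hx2F, hx2ge⟩ :=
      ((hF1top.eventually_const_lt (show 1 - γ/100 < 1 by linarith)).and
        (Filter.eventually_ge_atTop v)).exists
    have hx20 : 0 ≤ x2 := le_trans hv0 hx2ge
    refine engine P ξ hmeas hindep hident hξnn F hF θstar hθtop
      w w v x2 γ (lam v - lam w) (lam x2) (fun n => Set.Ioc (θstar n - v) (θstar n - w))
      (fun n => measurableSet_Ioc) hγpos le_rfl hwv hx2ge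
      ?_ ?_ (by linarith) ?_ ?_ (by linarith) (hlamnn x2 hx20) ?_ (hA x2 hx20) d L hL
    · -- F v - F w < γ/100
      have := abs_lt.1 hFw
      have := abs_lt.1 hFv
      linarith [(abs_lt.1 hFw).1, (abs_lt.1 hFv).2]
    · -- F v ≤ 1 - γ
      have : F v ≤ F (t0 + 1) := hFmono (by rw [hvdef]; linarith)
      linarith
    · intro n x hx
      exact hx.1
    · intro n x hx y hy hyw
      have := hx.2
      linarith
    · -- band measure convergence
      have hc := (hA v hv0).sub (hA w hw0)
      apply hc.congr
      intro n
      rw [FIoc P ξ hmeas hF _ _ (by linarith : θstar n - v ≤ θstar n - w)]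
      ring
end
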